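/- arXiv:1306.1513 — 5 statements merged into one kernel-verified Lean document; each statement's English description precedes it below -/
import Mathlib

section
/- Let T be a swap-closed triple tree and X, Y ∈ 2^ω. Then for every ordinal α: rk(T̂_{X,Y}) ≥ α if and only if rk(T̂_{Y,X}) ≥ α; moreover T̂_{X,Y} has an infinite branch if and only if T̂_{Y,X} does. -/
open MeasureTheory

/-- Cantor space `2^ω`. -/
abbrev Cantor : Type := ℕ → Bool

/-- Triples `(σ, s, τ)` of finite sequences: `σ, τ` Boolean-valued, `s` natural-number valued. -/
abbrev Trip : Type := List Bool × List ℕ × List Bool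

/-- A *triple tree*: a set of equal-length triples of finite sequences which is prefix-closed
(simultaneously restricting all three coordinates to a common shorter length stays in the set). -/
def IsTripleTree (T : Set Trip) : Prop :=
  (∀ p ∈ T, p.2.1.length = p.1.length ∧ p.2.2.length = p.1.length) ∧
  (∀ p ∈ T, ∀ n : ℕ, (p.1.take n, p.2.1.take n, p.2.2.take n) ∈ T)

/-- The restriction `X↾n` of `X : 2^ω` to its first `n` values, as a finite sequence. -/
def res (X : Cantor) (n : ℕ) : List Bool := (List.range n).map X

/-- `T` represents the relation `E` on Cantor space: `X E Y` iff there is `f : ℕ → ℕ`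
with `(X↾n, f↾n, Y↾n) ∈ T` for every `n`. -/
def Represents (T : Set Trip) (E : Set (Cantor × Cantor)) : Prop :=
  ∀ X Y : Cantor,
    (X, Y) ∈ E ↔ ∃ f : ℕ → ℕ, ∀ n : ℕ, (res X n, (List.range n).map f, res Y n) ∈ T

/-- A triple tree is swap-closed if `(σ, s, τ) ∈ T ↔ (τ, s, σ) ∈ T`. -/
def SwapClosed (T : Set Trip) : Prop :=
  ∀ (σ : List Bool) (s : List ℕ) (τ : List Bool), (σ, s, τ) ∈ T ↔ (τ, s, σ) ∈ T

/-- Nodes of the trees `T^k_{X,Y}`: a node of length `n` is a tuple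
`(s₁, t₁, s₂, t₂, …, t_{k-1}, s_k)` with each `sᵢ ∈ ℕ^n`, `tⱼ ∈ Bool^n`, encoded
"transposed", as a list of length `n` whose `m`-th entry collects the `m`-th values
`((s₁ m, …, s_k m), (t₁ m, …, t_{k-1} m))`. -/
abbrev KNode : Type := List (List ℕ × List Bool)

/-- The sequence `s_{i+1} ∈ ℕ^n` (for `0 ≤ i < k`) encoded in a node `u`. -/
def col1 (u : KNode) (i : ℕ) : List ℕ := u.map fun e => e.1.getD i 0

/-- The sequence `t_{j+1} ∈ Bool^n` (for `0 ≤ j < k-1`) encoded in a node `u`. -/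
def col2 (u : KNode) (j : ℕ) : List Bool := u.map fun e => e.2.getD j false

/-- The `i`-th boundary sequence (`0 ≤ i ≤ k`): `X↾n` for `i = 0`, `Y↾n` for `i = k`,
and `t_i` for `0 < i < k`. -/
def bdry (X Y : Cantor) (k : ℕ) (u : KNode) (i : ℕ) : List Bool :=
  if i = 0 then res X u.length else if i = k then res Y u.length else col2 u (i - 1)

/-- The tree `T^k_{X,Y}`: nodes of length `n` are tuples `(s₁, t₁, …, t_{k-1}, s_k)` with
`(X↾n, s₁, t₁) ∈ T`, `(t₁, s₂, t₂) ∈ T`, …, `(t_{k-1}, s_k, Y↾n) ∈ T`. -/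
def TkTree (T : Set Trip) (X Y : Cantor) (k : ℕ) : Set KNode :=
  {u | (∀ e ∈ u, e.1.length = k ∧ e.2.length = k - 1) ∧
       ∀ i < k, (bdry X Y k u i, col1 u i, bdry X Y k u (i + 1)) ∈ T}

/-- Nodes of `T̂_{X,Y}`: the root (`none`), together with pairs `(k, u)`. -/
abbrev HatNode : Type := Option (ℕ × KNode)

/-- The tree `T̂_{X,Y}`: the disjoint union of the trees `T^k_{X,Y}` (`k ≥ 1`) with all the
roots identified: the root together with all pairs `(k, u)` with `u` a nonempty node
of `T^k_{X,Y}`. -/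
def HatTree (T : Set Trip) (X Y : Cantor) : Set HatNode :=
  {p | p = none ∨ ∃ k u, p = some (k, u) ∧ 1 ≤ k ∧ u ≠ [] ∧ u ∈ TkTree T X Y k}

/-- Proper (coordinatewise) prefix order on finite sequences. -/
def ListLt {A : Type*} (u v : List A) : Prop := u <+: v ∧ u ≠ v

/-- `HatLt p q`: the node `q` of `T̂` properly extends the node `p`: every node properly
extends the root, and `(k', u')` properly extends `(k, u)` iff `k = k'` and `u` is a proper
prefix of `u'`. -/
def HatLt : HatNode → HatNode → Prop
  | none, some _ => True
  | some (k, u), some (k', u') => k = k' ∧ ListLt u u'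
  | _, none => False

/-- `RankGe S lt u α`: the rank of the node `u` in the tree `(S, lt)` is `≥ α`, defined by
transfinite recursion: for every `β < α` there is a node `v ∈ S` properly extending `u`
(i.e. `lt u v`) whose rank is `≥ β`. -/
def RankGe {A : Type*} (S : Set A) (lt : A → A → Prop) (u : A) (α : Ordinal.{0}) : Prop :=
  ∀ β : Ordinal.{0}, β < α → ∃ v, v ∈ S ∧ lt u v ∧ RankGe S lt v β
termination_by α

/-- `rk(T̂_{X,Y}) ≥ α`: the root belongs to the tree and its rank is `≥ α`. -/
def HatRankGe (T : Set Trip) (X Y : Cantor) (α : Ordinal.{0}) : Prop :=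
  none ∈ HatTree T X Y ∧ RankGe (HatTree T X Y) HatLt none α

/-- `rk(T^k_{X,Y}) ≥ α`: the root (the empty tuple) belongs to the tree and its rank is `≥ α`. -/
def TkRankGe (T : Set Trip) (X Y : Cantor) (k : ℕ) (α : Ordinal.{0}) : Prop :=
  ([] : KNode) ∈ TkTree T X Y k ∧ RankGe (TkTree T X Y k) ListLt [] α

/-- An infinite branch of a tree of `KNode`s: a sequence of nodes, one of each length `n`,
each a proper (coordinatewise) prefix of the next. -/
def HasInfBranch (S : Set KNode) : Prop :=
  ∃ g : ℕ → KNode, ∀ n : ℕ, g n ∈ S ∧ (g n).length = n ∧ ListLt (g n) (g (n + 1))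

/-- `T̂_{X,Y}` is ill-founded: it contains an infinite properly-extending chain of nodes. -/
def HatIllFounded (T : Set Trip) (X Y : Cantor) : Prop :=
  ∃ g : ℕ → HatNode, ∀ n : ℕ, g n ∈ HatTree T X Y ∧ HatLt (g n) (g (n + 1))

/-- Reverse each entry's coordinate lists. -/
def revNode (u : KNode) : KNode := u.map fun e => (e.1.reverse, e.2.reverse)

lemma revNode_revNode (u : KNode) : revNode (revNode u) = u := by
  unfold revNode
  rw [List.map_map]
  conv_rhs => rw [← List.map_id u]
  apply List.map_congr_left
  intro a _
  simp

lemma getD_reverse' {α} (l : List α) (i : ℕ) (d : α) (h : i < l.length) :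
    l.reverse.getD i d = l.getD (l.length - 1 - i) d := by
  rw [List.getD_eq_getElem _ _ (by simpa), List.getD_eq_getElem _ _ (by omega),
    List.getElem_reverse]

lemma tk_rev {T : Set Trip} (hswap : SwapClosed T) {X Y : Cantor} {k : ℕ} (hk : 1 ≤ k)
    {u : KNode} (hu : u ∈ TkTree T X Y k) : revNode u ∈ TkTree T Y X k := by
  obtain ⟨hlen, hi⟩ := hu
  have hlen' : ∀ e ∈ revNode u, e.1.length = k ∧ e.2.length = k - 1 := by
    intro e he
    simp only [revNode, List.mem_map] at he
    obtain ⟨a, ha, rfl⟩ := he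
    simpa using hlen a ha
  have hcol1 : ∀ i < k, col1 (revNode u) i = col1 u (k - 1 - i) := by
    intro i hik
    simp only [col1, revNode, List.map_map]
    apply List.map_congr_left
    intro a ha
    have h0 := (hlen a ha).1
    simp only [Function.comp]
    have h1 : a.1.length - 1 - i = k - 1 - i := by omega
    rw [getD_reverse' _ _ _ (by omega), h1]
  have hcol2 : ∀ j, j < k - 1 → col2 (revNode u) j = col2 u (k - 2 - j) := by
    intro j hj
    simp only [col2, revNode, List.map_map]
    apply List.map_congr_left
    intro a ha
    have h0 := (hlen a ha).2
    simp only [Function.comp]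
    have h2 : a.2.length - 1 - j = k - 2 - j := by omega
    rw [getD_reverse' _ _ _ (by omega), h2]
  have hbd : ∀ i ≤ k, bdry Y X k (revNode u) i = bdry X Y k u (k - i) := by
    intro i hik
    have hlu : (revNode u).length = u.length := by simp [revNode]
    simp only [bdry, hlu]
    split_ifs <;>
      first
        | rfl
        | omega
        | (rw [hcol2 (i - 1) (by omega)]; first | rfl | (congr 1; omega))
  refine ⟨hlen', fun i hik => ?_⟩
  rw [hbd i (by omega), hbd (i + 1) (by omega), hcol1 i hik]
  have h1 : k - i = (k - 1 - i) + 1 := by omega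
  have h2 : k - (i + 1) = k - 1 - i := by omega
  rw [h1, h2, hswap]
  exact hi (k - 1 - i) (by omega)

/-- The swap map on `HatNode`s. -/
def hatRev : HatNode → HatNode
  | none => none
  | some (k, u) => some (k, revNode u)

lemma hatRev_mem {T : Set Trip} (hswap : SwapClosed T) {X Y : Cantor} {p : HatNode}
    (hp : p ∈ HatTree T X Y) : hatRev p ∈ HatTree T Y X := by
  rcases hp with rfl | ⟨k, u, rfl, hk, hne, hu⟩
  · exact Or.inl rfl
  · exact Or.inr ⟨k, revNode u, rfl, hk, by simp [revNode, hne], tk_rev hswap hk hu⟩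

lemma listLt_rev {u v : KNode} (h : ListLt u v) : ListLt (revNode u) (revNode v) := by
  refine ⟨h.1.map _, fun he => h.2 ?_⟩
  have := congrArg revNode he
  rwa [revNode_revNode, revNode_revNode] at this

lemma hatRev_lt {p q : HatNode} (h : HatLt p q) : HatLt (hatRev p) (hatRev q) := by
  match p, q with
  | none, some (k, u) => exact trivial
  | some (k, u), some (k', u') =>
    obtain ⟨rfl, h2⟩ := h
    exact ⟨rfl, listLt_rev h2⟩
  | none, none => exact h.elim
  | some _, none => exact h.elim

lemma rankGe_map {A B : Type*} {S : Set A} {S' : Set B} {lt : A → A → Prop}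
    {lt' : B → B → Prop} (f : A → B) (h1 : ∀ v ∈ S, f v ∈ S')
    (h2 : ∀ u v, lt u v → lt' (f u) (f v)) :
    ∀ α : Ordinal.{0}, ∀ u : A, RankGe S lt u α → RankGe S' lt' (f u) α := by
  intro α
  induction α using Ordinal.induction with
  | h α IH =>
    intro u hu
    rw [RankGe] at hu ⊢
    intro β hβ
    obtain ⟨v, hv, hlt, hr⟩ := hu β hβ
    exact ⟨f v, h1 v hv, h2 u v hlt, IH β hβ v hr⟩

/-- For a swap-closed triple tree `T` and `X, Y ∈ 2^ω`: for every ordinal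
`α`, `rk(T̂_{X,Y}) ≥ α` iff `rk(T̂_{Y,X}) ≥ α`; moreover `T̂_{X,Y}` has an infinite branch
iff `T̂_{Y,X}` does. -/
theorem statement3 (T : Set Trip) (hT : IsTripleTree T) (hswap : SwapClosed T)
    (X Y : Cantor) :
    (∀ α : Ordinal.{0}, HatRankGe T X Y α ↔ HatRankGe T Y X α) ∧
    (HatIllFounded T X Y ↔ HatIllFounded T Y X) := by
  constructor
  · intro α
    constructor
    · rintro ⟨_, h⟩
      exact ⟨Or.inl rfl, rankGe_map hatRev (fun v hv => hatRev_mem hswap hv)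
        (fun u v h => hatRev_lt h) α none h⟩
    · rintro ⟨_, h⟩
      exact ⟨Or.inl rfl, rankGe_map hatRev (fun v hv => hatRev_mem hswap hv)
        (fun u v h => hatRev_lt h) α none h⟩
  · constructor
    · rintro ⟨g, hg⟩
      exact ⟨fun n => hatRev (g n), fun n => ⟨hatRev_mem hswap (hg n).1, hatRev_lt (hg n).2⟩⟩
    · rintro ⟨g, hg⟩
      exact ⟨fun n => hatRev (g n), fun n => ⟨hatRev_mem hswap (hg n).1, hatRev_lt (hg n).2⟩⟩
end

section
/- Let T be a triple tree, X, Y, Z ∈ 2^ω, k, l ≥ 1, and β an ordinal. If rk(T^k_{X,Y}) ≥ β and rk(T^l_{Y,Z}) ≥ β, then rk(T^{k+l}_{X,Z}) ≥ β. -/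
open MeasureTheory

section Statement8Aux

lemma listLt_length {A : Type*} {u v : List A} (h : ListLt u v) : u.length < v.length := by
  rcases h with ⟨hp, hne⟩
  rcases lt_or_eq_of_le hp.length_le with h | h
  · exact h
  · exact absurd (hp.eq_of_length h) hne

lemma rankGe_iff {A : Type*} (S : Set A) (lt : A → A → Prop) (u : A) (α : Ordinal.{0}) :
    RankGe S lt u α ↔ ∀ β : Ordinal.{0}, β < α → ∃ v, v ∈ S ∧ lt u v ∧ RankGe S lt v β := by
  rw [RankGe]

lemma rankGe_of_prefix {A : Type*} {S : Set (List A)} {u u' : List A} (h : u <+: u')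
    {γ : Ordinal.{0}} (hr : RankGe S ListLt u' γ) : RankGe S ListLt u γ := by
  rw [rankGe_iff] at hr ⊢
  intro β hβ
  obtain ⟨v, hvS, hlt, hv⟩ := hr β hβ
  have hlen := listLt_length hlt
  refine ⟨v, hvS, ⟨h.trans hlt.1, ?_⟩, hv⟩
  intro he
  subst he
  have := h.length_le
  omega

/-- The merge of two nodes, with middle column `Y`. -/
def mrg (Y : Cantor) (u v : KNode) : KNode :=
  (List.range u.length).map fun m =>
    ((u.getD m ([],[])).1 ++ (v.getD m ([],[])).1,
     (u.getD m ([],[])).2 ++ Y m :: (v.getD m ([],[])).2)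

@[simp] lemma length_mrg (Y : Cantor) (u v : KNode) : (mrg Y u v).length = u.length := by
  simp [mrg]

lemma map_eq_range_map {α β : Type*} (f : α → β) (l : List α) (d : α) :
    l.map f = (List.range l.length).map fun m => f (l.getD m d) := by
  apply List.ext_getElem
  · simp
  · intro m h1 h2
    simp only [List.getElem_map, List.getElem_range]
    rw [List.getD_eq_getElem _ _ (by simpa using h1)]

lemma mrg_take (Y : Cantor) (u v : KNode) (n : ℕ) (hu : n ≤ u.length) (hv : n ≤ v.length) :
    mrg Y (u.take n) (v.take n) = (mrg Y u v).take n := by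
  apply List.ext_getElem
  · simp [mrg]
  · intro m h1 h2
    have hm : m < n := by simp [mrg] at h1; omega
    have hgd : ∀ w : KNode, m < w.length → (w.take n).getD m ([],[]) = w.getD m ([],[]) := by
      intro w hw
      rw [List.getD_eq_getElem _ _ (by simp; omega), List.getD_eq_getElem _ _ hw,
        List.getElem_take]
    simp only [mrg, ← List.map_take, List.take_range,
      List.getElem_map, List.getElem_range]
    rw [hgd u (by omega), hgd v (by omega)]

lemma res_take (X : Cantor) (n m : ℕ) : (res X m).take n = res X (min n m) := by
  simp [res, ← List.map_take, List.take_range]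

lemma col1_take (u : KNode) (i n : ℕ) : col1 (u.take n) i = (col1 u i).take n := by
  simp [col1, List.map_take]

lemma col2_take (u : KNode) (j n : ℕ) : col2 (u.take n) j = (col2 u j).take n := by
  simp [col2, List.map_take]

lemma bdry_take (X Y : Cantor) (k : ℕ) (u : KNode) (n i : ℕ) :
    bdry X Y k (u.take n) i = (bdry X Y k u i).take n := by
  unfold bdry
  split_ifs <;> simp [res_take, col2_take]

lemma tkTree_take {T : Set Trip} (hT : IsTripleTree T) {X Y : Cantor} {k : ℕ} {u : KNode}
    (hu : u ∈ TkTree T X Y k) (n : ℕ) : u.take n ∈ TkTree T X Y k := by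
  obtain ⟨h1, h2⟩ := hu
  refine ⟨fun e he => h1 e (List.mem_of_mem_take he), fun i hi => ?_⟩
  have h3 := hT.2 _ (h2 i hi) n
  simpa [bdry_take, col1_take] using h3

lemma mrg_mem {T : Set Trip} {X Y Z : Cantor} {k l : ℕ}
    (hk : 1 ≤ k) (hl : 1 ≤ l) {u v : KNode}
    (hu : u ∈ TkTree T X Y k) (hv : v ∈ TkTree T Y Z l) (hlen : u.length = v.length) :
    mrg Y u v ∈ TkTree T X Z (k + l) := by
  have hue : ∀ m, m < u.length →
      (u.getD m ([],[])).1.length = k ∧ (u.getD m ([],[])).2.length = k - 1 := by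
    intro m hm
    rw [List.getD_eq_getElem _ _ hm]
    exact hu.1 _ (List.getElem_mem _)
  have hve : ∀ m, m < v.length →
      (v.getD m ([],[])).1.length = l ∧ (v.getD m ([],[])).2.length = l - 1 := by
    intro m hm
    rw [List.getD_eq_getElem _ _ hm]
    exact hv.1 _ (List.getElem_mem _)
  have hMlen : (mrg Y u v).length = u.length := length_mrg _ _ _
  have hc1l : ∀ i, i < k → col1 (mrg Y u v) i = col1 u i := by
    intro i hi
    rw [col1, mrg, List.map_map, col1, map_eq_range_map _ u ([],[])]
    apply List.map_congr_left
    intro m hm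
    rw [List.mem_range] at hm
    simp only [Function.comp_apply]
    exact List.getD_append _ _ _ _ (by rw [(hue m hm).1]; exact hi)
  have hc1r : ∀ i, k ≤ i → col1 (mrg Y u v) i = col1 v (i - k) := by
    intro i hi
    rw [col1, mrg, List.map_map, col1, map_eq_range_map _ v ([],[]), ← hlen]
    apply List.map_congr_left
    intro m hm
    rw [List.mem_range] at hm
    simp only [Function.comp_apply]
    rw [List.getD_append_right _ _ _ _ (by rw [(hue m hm).1]; exact hi), (hue m hm).1]
  have hc2l : ∀ j, j < k - 1 → col2 (mrg Y u v) j = col2 u j := by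
    intro j hj
    rw [col2, mrg, List.map_map, col2, map_eq_range_map _ u ([],[])]
    apply List.map_congr_left
    intro m hm
    rw [List.mem_range] at hm
    simp only [Function.comp_apply]
    exact List.getD_append _ _ _ _ (by rw [(hue m hm).2]; exact hj)
  have hc2m : col2 (mrg Y u v) (k - 1) = res Y u.length := by
    rw [col2, mrg, List.map_map, res]
    apply List.map_congr_left
    intro m hm
    rw [List.mem_range] at hm
    simp only [Function.comp_apply]
    rw [List.getD_append_right _ _ _ _ (by rw [(hue m hm).2]), (hue m hm).2,
      Nat.sub_self, List.getD_cons_zero]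
  have hc2r : ∀ j, k ≤ j → col2 (mrg Y u v) j = col2 v (j - k) := by
    intro j hj
    rw [col2, mrg, List.map_map, col2, map_eq_range_map _ v ([],[]), ← hlen]
    apply List.map_congr_left
    intro m hm
    rw [List.mem_range] at hm
    simp only [Function.comp_apply]
    rw [List.getD_append_right _ _ _ _ (by rw [(hue m hm).2]; omega), (hue m hm).2]
    have h3 : j - (k - 1) = (j - k) + 1 := by omega
    rw [h3, List.getD_cons_succ]
  constructor
  · intro e he
    rw [mrg, List.mem_map] at he
    obtain ⟨m, hm, rfl⟩ := he
    rw [List.mem_range] at hm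
    have h1 := hue m hm
    have h2 := hve m (hlen ▸ hm)
    refine ⟨?_, ?_⟩
    · rw [List.length_append, h1.1, h2.1]
    · rw [List.length_append, List.length_cons, h1.2, h2.2]; omega
  · intro i hi
    by_cases hik : i < k
    · have hb1 : bdry X Z (k + l) (mrg Y u v) i = bdry X Y k u i := by
        by_cases hi0 : i = 0
        · subst hi0; simp [bdry, hMlen]
        · have h1 : i ≠ k + l := by omega
          have h2 : i ≠ k := by omega
          simp only [bdry, if_neg hi0, if_neg h1, if_neg h2]
          exact hc2l (i - 1) (by omega)
      have hb2 : bdry X Z (k + l) (mrg Y u v) (i + 1) = bdry X Y k u (i + 1) := by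
        have h0 : i + 1 ≠ 0 := by omega
        have h1 : i + 1 ≠ k + l := by omega
        by_cases he : i + 1 = k
        · simp only [bdry, if_neg h0, if_neg h1, if_pos he, hMlen]
          rw [show i + 1 - 1 = k - 1 by omega]
          exact hc2m
        · simp only [bdry, if_neg h0, if_neg h1, if_neg he]
          exact hc2l (i + 1 - 1) (by omega)
      rw [hb1, hb2, hc1l i hik]
      exact hu.2 i hik
    · have hik2 : k ≤ i := not_lt.1 hik
      have hb1 : bdry X Z (k + l) (mrg Y u v) i = bdry Y Z l v (i - k) := by
        have h0 : i ≠ 0 := by omega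
        by_cases he : i = k
        · have h1 : i ≠ k + l := by omega
          simp only [bdry, if_neg h0, if_neg h1, show i - k = 0 by omega, if_pos rfl]
          rw [show i - 1 = k - 1 by omega, hc2m, hlen]
          simp
        · have h1 : i ≠ k + l := by omega
          have h2 : i - k ≠ 0 := by omega
          have h3 : i - k ≠ l := by omega
          simp only [bdry, if_neg h0, if_neg h1, if_neg h2, if_neg h3]
          rw [hc2r (i - 1) (by omega), show i - 1 - k = i - k - 1 by omega]
      have hb2 : bdry X Z (k + l) (mrg Y u v) (i + 1) = bdry Y Z l v (i - k + 1) := by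
        have h0 : i + 1 ≠ 0 := by omega
        have h0' : i - k + 1 ≠ 0 := by omega
        by_cases he : i + 1 = k + l
        · simp only [bdry, if_neg h0, if_pos he, if_neg h0', if_pos (show i - k + 1 = l by omega),
            hMlen, hlen]
        · have h3 : i - k + 1 ≠ l := by omega
          simp only [bdry, if_neg h0, if_neg he, if_neg h0', if_neg h3]
          rw [show i + 1 - 1 = i by omega, hc2r i hik2, show i - k + 1 - 1 = i - k by omega]
      rw [hb1, hb2, hc1r i hik2]
      exact hv.2 (i - k) (by omega)

lemma key_rank {T : Set Trip} (hT : IsTripleTree T) (X Y Z : Cantor) (k l : ℕ)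
    (hk : 1 ≤ k) (hl : 1 ≤ l) :
    ∀ β : Ordinal.{0}, ∀ u v : KNode, u ∈ TkTree T X Y k → v ∈ TkTree T Y Z l →
      u.length = v.length →
      RankGe (TkTree T X Y k) ListLt u β → RankGe (TkTree T Y Z l) ListLt v β →
      RankGe (TkTree T X Z (k + l)) ListLt (mrg Y u v) β := by
  intro β
  induction β using Ordinal.induction with
  | h β IH =>
    intro u v hu hv hlen hru hrv
    rw [rankGe_iff]
    intro γ hγ
    obtain ⟨u', hu'S, hu'lt, hu'r⟩ := (rankGe_iff _ _ _ _).1 hru γ hγ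
    obtain ⟨v', hv'S, hv'lt, hv'r⟩ := (rankGe_iff _ _ _ _).1 hrv γ hγ
    have hul := listLt_length hu'lt
    have hvl := listLt_length hv'lt
    set n := min u'.length v'.length with hn
    have hun : u.length < n := by omega
    have hlu : (u'.take n).length = n := by simp [hn]
    have hlv : (v'.take n).length = n := by simp [hn]
    have hmem : mrg Y (u'.take n) (v'.take n) ∈ TkTree T X Z (k + l) :=
      mrg_mem hk hl (tkTree_take hT hu'S n) (tkTree_take hT hv'S n) (by rw [hlu, hlv])
    have hpre : mrg Y u v <+: mrg Y (u'.take n) (v'.take n) := by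
      have h1 : u = (u'.take n).take u.length := by
        rw [List.take_take, min_eq_left (by omega), ← List.prefix_iff_eq_take]
        exact hu'lt.1
      have h2 : v = (v'.take n).take u.length := by
        rw [List.take_take, min_eq_left (by omega), hlen, ← List.prefix_iff_eq_take]
        exact hv'lt.1
      conv_lhs => rw [h1, h2]
      rw [mrg_take _ _ _ _ (by omega) (by omega)]
      exact List.take_prefix _ _
    refine ⟨mrg Y (u'.take n) (v'.take n), hmem, ⟨hpre, ?_⟩, ?_⟩
    · intro he
      apply_fun List.length at he
      rw [length_mrg, length_mrg, hlu] at he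
      omega
    · exact IH γ hγ (u'.take n) (v'.take n) (tkTree_take hT hu'S n) (tkTree_take hT hv'S n)
        (by rw [hlu, hlv]) (rankGe_of_prefix (List.take_prefix _ _) hu'r)
        (rankGe_of_prefix (List.take_prefix _ _) hv'r)

end Statement8Aux

/-- For a triple tree `T`, `X, Y, Z ∈ 2^ω`, `k, l ≥ 1` and an ordinal `β`:
if `rk(T^k_{X,Y}) ≥ β` and `rk(T^l_{Y,Z}) ≥ β`, then `rk(T^{k+l}_{X,Z}) ≥ β`. -/
theorem statement8 (T : Set Trip) (hT : IsTripleTree T) (X Y Z : Cantor) (k l : ℕ)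
    (hk : 1 ≤ k) (hl : 1 ≤ l) (β : Ordinal.{0})
    (h1 : TkRankGe T X Y k β) (h2 : TkRankGe T Y Z l β) :
    TkRankGe T X Z (k + l) β := by
  obtain ⟨hmem1, hr1⟩ := h1
  obtain ⟨hmem2, hr2⟩ := h2
  have h0 : mrg Y ([] : KNode) [] = [] := by simp [mrg]
  constructor
  · have := mrg_mem hk hl hmem1 hmem2 rfl
    rwa [h0] at this
  · have := key_rank hT X Y Z k l hk hl β [] [] hmem1 hmem2 rfl hr1 hr2
    rwa [h0] at this
end

section
/- Let E be an equivalence relation on Cantor space represented by a swap-closed triple tree T. Then for every ordinal α, the relation E_α on 2^ω defined by X E_α Y iff rk(T̂_{X,Y}) ≥ α is an equivalence relation (reflexive, symmetric, and transitive). -/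
open MeasureTheory

namespace S9

lemma rankGe_iff {A : Type*} (S : Set A) (lt : A → A → Prop) (u : A) (α : Ordinal.{0}) :
    RankGe S lt u α ↔ ∀ β : Ordinal.{0}, β < α → ∃ v, v ∈ S ∧ lt u v ∧ RankGe S lt v β := by
  rw [RankGe]

lemma res_length (X : Cantor) (n : ℕ) : (res X n).length = n := by simp [res]

lemma res_take (X : Cantor) (n m : ℕ) : (res X n).take m = res X (min m n) := by
  simp [res, ← List.map_take, List.take_range]

lemma res_getElem (X : Cantor) (n m : ℕ) (h : m < n) : (res X n)[m]'(by simp [res_length, h]) = X m := by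
  simp [res]

lemma listLt_length {A : Type*} {u v : List A} (h : ListLt u v) : u.length < v.length := by
  rcases h with ⟨h1, h2⟩
  rcases lt_or_eq_of_le h1.length_le with h | h
  · exact h
  · exact absurd (List.IsPrefix.eq_of_length h1 h) h2

lemma listLt_of_prefix_length {A : Type*} {u v : List A} (h : u <+: v)
    (hl : u.length < v.length) : ListLt u v :=
  ⟨h, fun e => by subst e; omega⟩

lemma listLt_map {A B : Type*} (f : A → B) {u v : List A} (h : ListLt u v) :
    ListLt (u.map f) (v.map f) :=
  listLt_of_prefix_length (h.1.map f) (by simpa using listLt_length h)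

lemma rankGe_of_prefix {A : Type*} {S : Set (List A)} {w u : List A} (h : w <+: u)
    {α : Ordinal.{0}} (hu : RankGe S ListLt u α) : RankGe S ListLt w α := by
  rw [rankGe_iff] at hu ⊢
  intro β hβ
  obtain ⟨v, h1, h2, h3⟩ := hu β hβ
  exact ⟨v, h1, listLt_of_prefix_length (h.trans h2.1)
    (lt_of_le_of_lt h.length_le (listLt_length h2)), h3⟩

lemma rankGe_map {A B : Type*} {S : Set A} {S' : Set B} {lt : A → A → Prop}
    {lt' : B → B → Prop} (g : A → B)
    (hS : ∀ a b, lt a b → b ∈ S → g b ∈ S')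
    (hlt : ∀ a b, lt a b → b ∈ S → lt' (g a) (g b)) :
    ∀ α : Ordinal.{0}, ∀ u, RankGe S lt u α → RankGe S' lt' (g u) α := by
  intro α
  induction α using Ordinal.induction with
  | h α IH =>
    intro u hu
    rw [rankGe_iff] at hu ⊢
    intro β hβ
    obtain ⟨v, h1, h2, h3⟩ := hu β hβ
    exact ⟨g v, hS u v h2 h1, hlt u v h2 h1, IH β hβ v h3⟩

end S9
namespace S9

lemma col1_take (u : KNode) (i m : ℕ) : col1 (u.take m) i = (col1 u i).take m := by
  simp [col1, List.map_take]

lemma col2_take (u : KNode) (j m : ℕ) : col2 (u.take m) j = (col2 u j).take m := by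
  simp [col2, List.map_take]

lemma bdry_take (X Y : Cantor) (k : ℕ) (u : KNode) (i m : ℕ) :
    bdry X Y k (u.take m) i = (bdry X Y k u i).take m := by
  unfold bdry
  split_ifs <;> simp [res_take, col2_take, List.length_take]

lemma tk_take {T : Set Trip} (hT : IsTripleTree T) {X Y : Cantor} {k : ℕ} {u : KNode}
    (hu : u ∈ TkTree T X Y k) (m : ℕ) : u.take m ∈ TkTree T X Y k := by
  refine ⟨fun e he => hu.1 e (List.take_subset m u he), fun i hi => ?_⟩
  rw [bdry_take, bdry_take, col1_take]
  exact hT.2 _ (hu.2 i hi) m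

def rev (u : KNode) : KNode := u.map fun e => (e.1.reverse, e.2.reverse)

lemma rev_length (u : KNode) : (rev u).length = u.length := by simp [rev]

lemma getD_reverse {A : Type*} (l : List A) (d : A) (i : ℕ) (h : i < l.length) :
    l.reverse.getD i d = l.getD (l.length - 1 - i) d := by
  rw [List.getD_eq_getElem _ _ (by simpa using h), List.getD_eq_getElem _ _ (by omega)]
  exact List.getElem_reverse ..

lemma col1_rev {u : KNode} {k : ℕ} (hlen : ∀ e ∈ u, e.1.length = k) (i : ℕ) (hi : i < k) :
    col1 (rev u) i = col1 u (k - 1 - i) := by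
  unfold col1 rev
  rw [List.map_map]
  refine List.map_congr_left fun e he => ?_
  have h1 := hlen e he
  simp only [Function.comp]
  rw [getD_reverse _ _ _ (by omega), h1]

lemma col2_rev {u : KNode} {k : ℕ} (hlen : ∀ e ∈ u, e.2.length = k - 1) (j : ℕ)
    (hj : j < k - 1) : col2 (rev u) j = col2 u (k - 2 - j) := by
  unfold col2 rev
  rw [List.map_map]
  refine List.map_congr_left fun e he => ?_
  have h1 := hlen e he
  simp only [Function.comp]
  rw [getD_reverse _ _ _ (by omega), h1]
  congr 1 <;> omega

lemma bdry_rev {X Y : Cantor} {k : ℕ} {u : KNode}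
    (hlen : ∀ e ∈ u, e.2.length = k - 1) (i : ℕ) (hi : i ≤ k) (hk : 1 ≤ k) :
    bdry Y X k (rev u) i = bdry X Y k u (k - i) := by
  have hn : (rev u).length = u.length := rev_length u
  by_cases h0 : i = 0
  · simp only [bdry, h0, Nat.sub_zero, hn]
    simp [show ¬ k = 0 by omega]
  · by_cases hik : i = k
    · simp only [bdry, hik, Nat.sub_self, hn]
      simp [show ¬ k = 0 by omega]
    · simp only [bdry, hn]
      rw [if_neg h0, if_neg hik, if_neg (show ¬ k - i = 0 by omega),
        if_neg (show ¬ k - i = k by omega), col2_rev hlen (i-1) (by omega)]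
      congr 1 <;> omega

lemma tk_rev {T : Set Trip} (hswap : SwapClosed T) {X Y : Cantor} {k : ℕ} {u : KNode}
    (hu : u ∈ TkTree T X Y k) : rev u ∈ TkTree T Y X k := by
  constructor
  · intro e he
    simp only [rev, List.mem_map] at he
    obtain ⟨e', he', rfl⟩ := he
    have := hu.1 e' he'
    simpa using this
  · intro i hi
    have hk : 1 ≤ k := by omega
    have hlen2 : ∀ e ∈ u, e.2.length = k - 1 := fun e he => (hu.1 e he).2
    have hlen1 : ∀ e ∈ u, e.1.length = k := fun e he => (hu.1 e he).1
    rw [bdry_rev hlen2 i (by omega) hk, bdry_rev hlen2 (i+1) (by omega) hk,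
      col1_rev hlen1 i hi]
    rw [hswap]
    have h := hu.2 (k - 1 - i) (by omega)
    have e1 : k - 1 - i + 1 = k - i := by omega
    have e2 : k - (i + 1) = k - 1 - i := by omega
    rw [e1] at h
    rw [e2]
    exact h

end S9
namespace S9

def dflt : List ℕ × List Bool := ([], [])

def conc (Y : Cantor) (u v : KNode) : KNode :=
  (List.range u.length).map fun m =>
    ((u.getD m dflt).1 ++ (v.getD m dflt).1,
     (u.getD m dflt).2 ++ Y m :: (v.getD m dflt).2)

lemma conc_length (Y : Cantor) (u v : KNode) : (conc Y u v).length = u.length := by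
  simp [conc]

lemma conc_getElem (Y : Cantor) (u v : KNode) (m : ℕ) (h : m < u.length) :
    (conc Y u v)[m]'(by rw [conc_length]; exact h) =
      ((u.getD m dflt).1 ++ (v.getD m dflt).1,
       (u.getD m dflt).2 ++ Y m :: (v.getD m dflt).2) := by
  simp [conc]

lemma getD_getElem {A : Type*} (l : List A) (d : A) (m : ℕ) (h : m < l.length) :
    l.getD m d = l[m] := List.getD_eq_getElem l d h

section conc
variable {T : Set Trip} {X Y Z : Cantor} {k1 k2 : ℕ} {u v : KNode}

lemma entry1_len (hu : u ∈ TkTree T X Y k1) {m : ℕ} (h : m < u.length) :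
    (u.getD m dflt).1.length = k1 := by
  rw [getD_getElem _ _ _ h]
  exact (hu.1 _ (List.getElem_mem h)).1

lemma entry2_len (hu : u ∈ TkTree T X Y k1) {m : ℕ} (h : m < u.length) :
    (u.getD m dflt).2.length = k1 - 1 := by
  rw [getD_getElem _ _ _ h]
  exact (hu.1 _ (List.getElem_mem h)).2

variable (hu : u ∈ TkTree T X Y k1) (hv : v ∈ TkTree T Y Z k2)
  (hk1 : 1 ≤ k1) (hk2 : 1 ≤ k2) (hl : u.length = v.length)

include hu hv hl

lemma col1_conc_left {i : ℕ} (hi : i < k1) : col1 (conc Y u v) i = col1 u i := by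
  refine List.ext_getElem (by simp [col1, conc_length]) fun m h1 h2 => ?_
  simp only [col1, List.getElem_map, List.length_map] at h1 h2 ⊢
  rw [conc_length] at h1
  rw [conc_getElem Y u v m h1]
  simp only
  rw [List.getD_append _ _ _ _ (by rw [entry1_len hu h1]; exact hi),
    getD_getElem _ _ _ h1]

lemma col1_conc_right {i : ℕ} (hi : k1 ≤ i) :
    col1 (conc Y u v) i = col1 v (i - k1) := by
  refine List.ext_getElem (by simp [col1, conc_length, hl]) fun m h1 h2 => ?_
  simp only [col1, List.getElem_map, List.length_map] at h1 h2 ⊢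
  rw [conc_length] at h1
  rw [conc_getElem Y u v m h1]
  simp only
  rw [List.getD_append_right _ _ _ _ (by rw [entry1_len hu h1]; exact hi),
    entry1_len hu h1, getD_getElem _ _ _ (by omega : m < v.length)]

include hk1 in
lemma col2_conc_left {j : ℕ} (hj : j < k1 - 1) : col2 (conc Y u v) j = col2 u j := by
  refine List.ext_getElem (by simp [col2, conc_length]) fun m h1 h2 => ?_
  simp only [col2, List.getElem_map, List.length_map] at h1 h2 ⊢
  rw [conc_length] at h1
  rw [conc_getElem Y u v m h1]
  simp only
  rw [List.getD_append _ _ _ _ (by rw [entry2_len hu h1]; exact hj),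
    getD_getElem _ _ _ h1]

include hk1 in
lemma col2_conc_mid : col2 (conc Y u v) (k1 - 1) = res Y u.length := by
  refine List.ext_getElem (by simp [col2, conc_length, res_length]) fun m h1 h2 => ?_
  simp only [col2, List.getElem_map, List.length_map] at h1 ⊢
  rw [conc_length] at h1
  rw [conc_getElem Y u v m h1, res_getElem Y _ _ h1]
  simp only
  rw [List.getD_append_right _ _ _ _ (by rw [entry2_len hu h1])]
  rw [entry2_len hu h1, Nat.sub_self, List.getD_cons_zero]

include hk1 in
lemma col2_conc_right {j : ℕ} (hj : k1 ≤ j) :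
    col2 (conc Y u v) j = col2 v (j - k1) := by
  refine List.ext_getElem (by simp [col2, conc_length, hl]) fun m h1 h2 => ?_
  simp only [col2, List.getElem_map, List.length_map] at h1 h2 ⊢
  rw [conc_length] at h1
  rw [conc_getElem Y u v m h1]
  simp only
  rw [List.getD_append_right _ _ _ _ (by rw [entry2_len hu h1]; omega),
    entry2_len hu h1]
  have : j - (k1 - 1) = (j - k1) + 1 := by omega
  rw [this, List.getD_cons_succ, getD_getElem _ _ _ (by omega : m < v.length)]

include hk1 hk2 in
lemma bdry_conc_left {i : ℕ} (hi : i ≤ k1) :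
    bdry X Z (k1 + k2) (conc Y u v) i = bdry X Y k1 u i := by
  by_cases h0 : i = 0
  · simp only [bdry, h0, conc_length]
    simp
  · by_cases hik : i = k1
    · have hne : ¬ i = k1 + k2 := by omega
      simp only [bdry, if_neg h0, if_neg hne, hik]
      rw [col2_conc_mid hu hv hk1 hl]
      simp [conc_length, show ¬ k1 = 0 by omega, show ¬ k1 = k1 + k2 by omega, show ¬ k2 = 0 by omega]
    · have hlt : i < k1 := by omega
      simp only [bdry, if_neg h0, if_neg (show ¬ i = k1 + k2 by omega), if_neg hik]
      exact col2_conc_left hu hv hk1 hl (by omega)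

include hk1 hk2 in
lemma bdry_conc_right {i : ℕ} (hi1 : k1 ≤ i) (hi2 : i ≤ k1 + k2) :
    bdry X Z (k1 + k2) (conc Y u v) i = bdry Y Z k2 v (i - k1) := by
  by_cases hik : i = k1
  · simp only [bdry, hik, if_neg (show ¬ k1 = 0 by omega),
      if_neg (show ¬ k1 = k1 + k2 by omega), Nat.sub_self, if_pos rfl]
    rw [col2_conc_mid hu hv hk1 hl, hl]
    simp [show ¬ k2 = 0 by omega]
  · by_cases hiK : i = k1 + k2
    · simp only [bdry, hiK, if_neg (show ¬ k1 + k2 = 0 by omega), if_pos rfl,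
        if_neg (show ¬ k1 + k2 - k1 = 0 by omega), conc_length, hl]
      rw [show k1 + k2 - k1 = k2 from by omega]
      simp
    · simp only [bdry, if_neg (show ¬ i = 0 by omega), if_neg hiK,
        if_neg (show ¬ i - k1 = 0 by omega), if_neg (show ¬ i - k1 = k2 by omega)]
      rw [col2_conc_right hu hv hk1 hl (by omega : k1 ≤ i - 1)]
      congr 1 <;> omega

include hk1 hk2 in
lemma tk_conc : conc Y u v ∈ TkTree T X Z (k1 + k2) := by
  constructor
  · intro e he
    simp only [conc, List.mem_map, List.mem_range] at he
    obtain ⟨m, hm, rfl⟩ := he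
    constructor
    · simp only [List.length_append, entry1_len hu hm, entry1_len hv (show m < v.length by omega)]
    · simp only [List.length_append, List.length_cons, entry2_len hu hm,
        entry2_len hv (show m < v.length by omega)]
      omega
  · intro i hi
    rcases lt_or_ge i k1 with h | h
    · rw [bdry_conc_left hu hv hk1 hk2 hl (by omega),
        bdry_conc_left hu hv hk1 hk2 hl (by omega : i + 1 ≤ k1),
        col1_conc_left hu hv hl h]
      exact hu.2 i h
    · rw [bdry_conc_right hu hv hk1 hk2 hl h (by omega),
        bdry_conc_right hu hv hk1 hk2 hl (by omega : k1 ≤ i + 1) (by omega),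
        col1_conc_right hu hv hl h,
        show i + 1 - k1 = (i - k1) + 1 from by omega]
      exact hv.2 (i - k1) (by omega)

end conc

lemma conc_take (Y : Cantor) (u v : KNode) (hl : u.length = v.length) (m : ℕ) :
    conc Y (u.take m) (v.take m) = (conc Y u v).take m := by
  refine List.ext_getElem (by simp [conc_length, List.length_take]) fun m' h1 h2 => ?_
  rw [conc_length, List.length_take] at h1
  rw [conc_getElem _ _ _ m' (by simpa [List.length_take] using h1)]
  rw [List.getElem_take, conc_getElem _ _ _ m' (by omega)]
  rw [getD_getElem _ _ _ (by simp [List.length_take]; omega),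
      getD_getElem _ _ _ (by simp [List.length_take]; omega),
      getD_getElem _ _ _ (by omega : m' < u.length),
      getD_getElem _ _ _ (by omega : m' < v.length)]
  simp [List.getElem_take]

end S9
namespace S9

variable {T : Set Trip}

lemma hatLt_none_right (a : HatNode) : ¬ HatLt a none := by
  cases a <;> exact fun h => h

lemma listLt_ne_nil {A : Type*} {u v : List A} (h : ListLt u v) : v ≠ [] := by
  have := listLt_length h
  intro e
  subst e
  simp at this

lemma mem_hat {X Y : Cantor} {k : ℕ} {u : KNode} (hk : 1 ≤ k) (hne : u ≠ [])
    (hu : u ∈ TkTree T X Y k) : (some (k, u) : HatNode) ∈ HatTree T X Y :=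
  Or.inr ⟨k, u, rfl, hk, hne, hu⟩

lemma hat_mem_elim {X Y : Cantor} {k : ℕ} {u : KNode}
    (h : (some (k, u) : HatNode) ∈ HatTree T X Y) :
    1 ≤ k ∧ u ≠ [] ∧ u ∈ TkTree T X Y k := by
  rcases h with h | ⟨k', u', heq, hk, hne, hm⟩
  · exact absurd h (by simp)
  · obtain ⟨rfl, rfl⟩ : k = k' ∧ u = u' := by
      have := Option.some.inj heq
      exact ⟨congrArg Prod.fst this, congrArg Prod.snd this⟩
    exact ⟨hk, hne, hm⟩

lemma hat_of_tk {X Y : Cantor} {k : ℕ} (hk : 1 ≤ k) (α : Ordinal.{0}) (u : KNode)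
    (h : RankGe (TkTree T X Y k) ListLt u α) :
    RankGe (HatTree T X Y) HatLt (some (k, u)) α :=
  rankGe_map (fun w => (some (k, w) : HatNode))
    (fun _ b hab hb => mem_hat hk (listLt_ne_nil hab) hb)
    (fun _ _ hab _ => ⟨rfl, hab⟩) α u h

lemma tk_of_hat {X Y : Cantor} :
    ∀ α : Ordinal.{0}, ∀ (k : ℕ) (u : KNode),
      RankGe (HatTree T X Y) HatLt (some (k, u)) α →
      RankGe (TkTree T X Y k) ListLt u α := by
  intro α
  induction α using Ordinal.induction with
  | h α IH =>
    intro k u hu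
    rw [rankGe_iff] at hu ⊢
    intro β hβ
    obtain ⟨v, h1, h2, h3⟩ := hu β hβ
    match v with
    | none => exact (hatLt_none_right _ h2).elim
    | some (k', u') =>
      obtain ⟨hkk, hlt⟩ := h2
      subst hkk
      obtain ⟨_, _, hm⟩ := hat_mem_elim h1
      exact ⟨u', hm, hlt, IH β hβ k u' h3⟩

lemma rank_conc (hT : IsTripleTree T) {X Y Z : Cantor} {k1 k2 : ℕ}
    (hk1 : 1 ≤ k1) (hk2 : 1 ≤ k2) :
    ∀ α : Ordinal.{0}, ∀ u v : KNode, u ∈ TkTree T X Y k1 → v ∈ TkTree T Y Z k2 →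
      u.length = v.length →
      RankGe (TkTree T X Y k1) ListLt u α → RankGe (TkTree T Y Z k2) ListLt v α →
      RankGe (TkTree T X Z (k1 + k2)) ListLt (conc Y u v) α := by
  intro α
  induction α using Ordinal.induction with
  | h α IH =>
    intro u v hu hv hl hru hrv
    rw [rankGe_iff] at hru hrv ⊢
    intro β hβ
    obtain ⟨u', hu'S, hu'lt, hu'r⟩ := hru β hβ
    obtain ⟨v', hv'S, hv'lt, hv'r⟩ := hrv β hβ
    set m := min u'.length v'.length with hm
    have hmu : u.length < m :=
      lt_min (listLt_length hu'lt) (hl ▸ listLt_length hv'lt)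
    have hu'' : u'.take m ∈ TkTree T X Y k1 := tk_take hT hu'S m
    have hv'' : v'.take m ∈ TkTree T Y Z k2 := tk_take hT hv'S m
    have hlu : (u'.take m).length = m := by
      rw [List.length_take]
      exact min_eq_left (min_le_left _ _)
    have hlv : (v'.take m).length = m := by
      rw [List.length_take]
      exact min_eq_left (min_le_right _ _)
    have hpu : u = u'.take u.length := List.prefix_iff_eq_take.1 hu'lt.1
    have hpv : v = v'.take v.length := List.prefix_iff_eq_take.1 hv'lt.1
    have hpre : conc Y u v <+: conc Y (u'.take m) (v'.take m) := by
      rw [List.prefix_iff_eq_take, conc_length,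
        ← conc_take Y (u'.take m) (v'.take m) (by rw [hlu, hlv]) u.length]
      congr 1
      · rw [List.take_take, min_eq_left hmu.le, ← hpu]
      · rw [List.take_take, min_eq_left (by omega : u.length ≤ m), hl, ← hpv]
    refine ⟨conc Y (u'.take m) (v'.take m),
      tk_conc hu'' hv'' hk1 hk2 (by rw [hlu, hlv]),
      listLt_of_prefix_length hpre (by rw [conc_length, conc_length, hlu]; exact hmu),
      IH β hβ _ _ hu'' hv'' (by rw [hlu, hlv])
        (rankGe_of_prefix (List.take_prefix m u') hu'r)
        (rankGe_of_prefix (List.take_prefix m v') hv'r)⟩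

/-! Reflexivity -/

def bb (X : Cantor) (f : ℕ → ℕ) (n : ℕ) : KNode :=
  (List.range n).map fun m => ([f m], [])

lemma bb_length (X : Cantor) (f : ℕ → ℕ) (n : ℕ) : (bb X f n).length = n := by simp [bb]

lemma bb_ne (X : Cantor) (f : ℕ → ℕ) (n : ℕ) : bb X f (n + 1) ≠ [] := by
  intro h
  have := congrArg List.length h
  simp [bb_length] at this

lemma bb_mem {X : Cantor} {f : ℕ → ℕ}
    (hf : ∀ n, (res X n, (List.range n).map f, res X n) ∈ T) (n : ℕ) :
    bb X f n ∈ TkTree T X X 1 := by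
  constructor
  · intro e he
    simp only [bb, List.mem_map] at he
    obtain ⟨m, hm, rfl⟩ := he
    simp
  · intro i hi
    have h0 : i = 0 := by omega
    subst h0
    have hb0 : bdry X X 1 (bb X f n) 0 = res X n := by
      simp [bdry, bb_length]
    have hb1 : bdry X X 1 (bb X f n) 1 = res X n := by
      simp [bdry, bb_length]
    have hc : col1 (bb X f n) 0 = (List.range n).map f := by
      simp [col1, bb, List.map_map, Function.comp]
    rw [hb0, hb1, hc]
    exact hf n

lemma bb_lt (X : Cantor) (f : ℕ → ℕ) (n : ℕ) : ListLt (bb X f n) (bb X f (n + 1)) := by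
  refine listLt_of_prefix_length ?_ (by simp [bb_length])
  rw [List.prefix_iff_eq_take, bb_length]
  simp [bb, ← List.map_take, List.take_range, min_eq_left (Nat.le_succ n)]

lemma bb_rank {X : Cantor} {f : ℕ → ℕ}
    (hf : ∀ n, (res X n, (List.range n).map f, res X n) ∈ T) :
    ∀ α : Ordinal.{0}, ∀ n : ℕ,
      RankGe (HatTree T X X) HatLt (some (1, bb X f n)) α := by
  intro α
  induction α using Ordinal.induction with
  | h α IH =>
    intro n
    rw [rankGe_iff]
    intro β hβ
    exact ⟨some (1, bb X f (n + 1)),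
      mem_hat le_rfl (bb_ne X f n) (bb_mem hf (n + 1)),
      ⟨rfl, bb_lt X f n⟩, IH β hβ (n + 1)⟩

lemma hat_refl {X : Cantor} {f : ℕ → ℕ}
    (hf : ∀ n, (res X n, (List.range n).map f, res X n) ∈ T) (α : Ordinal.{0}) :
    RankGe (HatTree T X X) HatLt none α := by
  rw [rankGe_iff]
  intro β hβ
  exact ⟨some (1, bb X f 1), mem_hat le_rfl (bb_ne X f 0) (bb_mem hf 1), trivial,
    bb_rank hf β 1⟩

/-! Symmetry -/

def grev : HatNode → HatNode
  | none => none
  | some (k, u) => some (k, rev u)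

lemma grev_mem (hswap : SwapClosed T) {X Y : Cantor} :
    ∀ a b : HatNode, HatLt a b → b ∈ HatTree T X Y → grev b ∈ HatTree T Y X := by
  intro a b hab hb
  match b with
  | none => exact (hatLt_none_right a hab).elim
  | some (k, u) =>
    obtain ⟨hk, hne, hm⟩ := hat_mem_elim hb
    refine mem_hat hk ?_ (tk_rev hswap hm)
    intro h
    exact hne (by simpa [rev] using h)

lemma grev_lt {X Y : Cantor} :
    ∀ a b : HatNode, HatLt a b → b ∈ HatTree T X Y → HatLt (grev a) (grev b) := by
  intro a b hab _
  match a, b with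
  | none, none => exact hab.elim
  | some p, none => exact hab.elim
  | none, some (k, u) => exact trivial
  | some (k, u), some (k', u') =>
    obtain ⟨h1, h2⟩ := hab
    exact ⟨h1, listLt_map _ h2⟩

end S9
/-- If an equivalence relation `E` on Cantor space is represented by a
swap-closed triple tree `T`, then for every ordinal `α` the relation
`X E_α Y ↔ rk(T̂_{X,Y}) ≥ α` is an equivalence relation. -/
theorem statement9 (E : Set (Cantor × Cantor)) (T : Set Trip)
    (hT : IsTripleTree T) (hswap : SwapClosed T) (hrep : Represents T E)
    (hE : Equivalence fun X Y : Cantor => (X, Y) ∈ E) :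
    ∀ α : Ordinal.{0}, Equivalence fun X Y : Cantor => HatRankGe T X Y α := by
  intro α
  constructor
  · -- reflexivity
    intro X
    obtain ⟨f, hf⟩ := (hrep X X).1 (hE.refl X)
    exact ⟨Or.inl rfl, S9.hat_refl hf α⟩
  · -- symmetry
    intro X Y h
    exact ⟨Or.inl rfl,
      S9.rankGe_map S9.grev (S9.grev_mem hswap) S9.grev_lt α none h.2⟩
  · -- transitivity
    intro X Y Z h1 h2
    refine ⟨Or.inl rfl, ?_⟩
    rw [S9.rankGe_iff]
    intro β hβ
    obtain ⟨p, hp, hplt, hpr⟩ := (S9.rankGe_iff _ _ _ _).1 h1.2 β hβ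
    obtain ⟨q, hq, hqlt, hqr⟩ := (S9.rankGe_iff _ _ _ _).1 h2.2 β hβ
    match p, q with
    | none, _ => exact (S9.hatLt_none_right _ hplt).elim
    | some _, none => exact (S9.hatLt_none_right _ hqlt).elim
    | some (k1, u), some (k2, v) =>
      obtain ⟨hk1, hun, hu⟩ := S9.hat_mem_elim hp
      obtain ⟨hk2, hvn, hv⟩ := S9.hat_mem_elim hq
      have hru : RankGe (TkTree T X Y k1) ListLt u β := S9.tk_of_hat β k1 u hpr
      have hrv : RankGe (TkTree T Y Z k2) ListLt v β := S9.tk_of_hat β k2 v hqr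
      set m := min u.length v.length with hm
      have hm1 : 1 ≤ m :=
        le_min (List.length_pos_iff.2 hun) (List.length_pos_iff.2 hvn)
      have hu' : u.take m ∈ TkTree T X Y k1 := S9.tk_take hT hu m
      have hv' : v.take m ∈ TkTree T Y Z k2 := S9.tk_take hT hv m
      have hlu : (u.take m).length = m := by
        rw [List.length_take]
        exact min_eq_left (min_le_left _ _)
      have hlv : (v.take m).length = m := by
        rw [List.length_take]
        exact min_eq_left (min_le_right _ _)
      have hcm : S9.conc Y (u.take m) (v.take m) ∈ TkTree T X Z (k1 + k2) :=
        S9.tk_conc hu' hv' hk1 hk2 (by rw [hlu, hlv])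
      have hcne : S9.conc Y (u.take m) (v.take m) ≠ [] := by
        intro h
        have := congrArg List.length h
        rw [S9.conc_length, hlu] at this
        simp at this
        omega
      have hcr : RankGe (TkTree T X Z (k1 + k2)) ListLt
          (S9.conc Y (u.take m) (v.take m)) β :=
        S9.rank_conc hT hk1 hk2 β _ _ hu' hv' (by rw [hlu, hlv])
          (S9.rankGe_of_prefix (List.take_prefix m u) hru)
          (S9.rankGe_of_prefix (List.take_prefix m v) hrv)
      exact ⟨some (k1 + k2, S9.conc Y (u.take m) (v.take m)),
        S9.mem_hat (by omega) hcne hcm, trivial,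
        S9.hat_of_tk (by omega) β _ hcr⟩
end

section
/- For every analytic equivalence relation E on Cantor space (E an analytic subset of 2^ω × 2^ω) there exists a family (E_α), indexed by the countable ordinals α < ω₁, of equivalence relations on 2^ω such that: (i) each E_α is a Borel subset of 2^ω × 2^ω; (ii) the family is decreasing, i.e., if α ≤ β < ω₁ then E_β ⊆ E_α; and (iii) E = ⋂_{α < ω₁} E_α, i.e., for all X, Y: X E Y iff X E_α Y for every α < ω₁. -/
open MeasureTheory

noncomputable section Burgess

def ω₁ : Ordinal.{0} := (Cardinal.aleph 1).ord

lemma le_aleph0_of_lt_aleph1 {c : Cardinal.{0}} (h : c < Cardinal.aleph 1) :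
    c ≤ Cardinal.aleph0 := by
  rw [← Cardinal.succ_aleph0, Order.lt_succ_iff] at h; exact h

lemma countable_Iio_of_lt_omega1 {o : Ordinal.{0}} (h : o < ω₁) : Countable (Set.Iio o) := by
  have h1 := Ordinal.mk_Iio_ordinal o
  have h2 : o.card < Cardinal.aleph 1 := Cardinal.lt_ord.mp h
  rw [← Cardinal.mk_le_aleph0_iff, h1, Cardinal.lift_le_aleph0]
  exact le_aleph0_of_lt_aleph1 h2

lemma omega1_isLimit : Order.IsSuccLimit ω₁ :=
  Cardinal.isSuccLimit_ord (Cardinal.aleph0_le_aleph 1)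

lemma succ_lt_omega1 {o : Ordinal.{0}} (h : o < ω₁) : o + 1 < ω₁ := by
  simpa [Order.succ_eq_add_one] using omega1_isLimit.succ_lt h

lemma sup_lt_omega1 {κ : Type} [Countable κ] (F : κ → Ordinal.{0}) (hF : ∀ i, F i < ω₁) :
    (⨆ i, F i) < ω₁ := by
  apply Ordinal.iSup_lt_ord _ hF
  rw [ω₁, Cardinal.isRegular_aleph_one.cof_eq]
  exact lt_of_le_of_lt Cardinal.mk_le_aleph0 Cardinal.aleph0_lt_aleph_one

/-- `RkP P α s` : node `s` belongs to the tree `P` and has rank `≥ α` in it. -/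
def RkP {ι : Type} (P : List ι → Prop) : Ordinal.{0} → List ι → Prop
  | α, s => P s ∧ ∀ β < α, ∃ i, RkP P β (s ++ [i])
termination_by α _ => α

lemma RkP_iff {ι : Type} (P : List ι → Prop) (α : Ordinal.{0}) (s : List ι) :
    RkP P α s ↔ (P s ∧ ∀ β < α, ∃ i, RkP P β (s ++ [i])) := by rw [RkP]

lemma RkP.mono {ι : Type} {P : List ι → Prop} {α β : Ordinal.{0}} {s : List ι}
    (hβ : β ≤ α) (h : RkP P α s) : RkP P β s := by
  rw [RkP_iff] at h ⊢
  exact ⟨h.1, fun γ hγ => h.2 γ (lt_of_lt_of_le hγ hβ)⟩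

lemma RkP_limit {ι : Type} {P : List ι → Prop} {δ : Ordinal.{0}}
    (h0 : 0 < δ) (hlim : ∀ β < δ, ∃ γ, β < γ ∧ γ < δ) (s : List ι) :
    RkP P δ s ↔ ∀ γ < δ, RkP P γ s := by
  constructor
  · exact fun h γ hγ => h.mono hγ.le
  · intro h
    rw [RkP_iff]
    refine ⟨((RkP_iff _ _ _).mp (h 0 h0)).1, fun β hβ => ?_⟩
    obtain ⟨γ, hβγ, hγδ⟩ := hlim β hβ
    exact ((RkP_iff _ _ _).mp (h γ hγδ)).2 β hβγ

lemma RkP_measurable {ι X : Type} [Countable ι] [MeasurableSpace X] (D : List ι → Set X)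
    (hD : ∀ s, MeasurableSet (D s)) :
    ∀ α < ω₁, ∀ s, MeasurableSet {w | RkP (fun l => w ∈ D l) α s} := by
  intro α
  induction α using Ordinal.induction with
  | h α IH =>
    intro hα s
    haveI : Countable (Set.Iio α) := countable_Iio_of_lt_omega1 hα
    have hset : {w | RkP (fun l => w ∈ D l) α s}
        = D s ∩ ⋂ (β : Set.Iio α), ⋃ i, {w | RkP (fun l => w ∈ D l) β.1 (s ++ [i])} := by
      ext w
      simp only [Set.mem_setOf_eq, Set.mem_inter_iff, Set.mem_iInter, Set.mem_iUnion,
        RkP_iff (fun l => w ∈ D l) α s]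
      exact ⟨fun h => ⟨h.1, fun β => h.2 β.1 β.2⟩, fun h => ⟨h.1, fun β hβ => h.2 ⟨β, hβ⟩⟩⟩
    rw [hset]
    exact (hD s).inter <| MeasurableSet.iInter fun β =>
      MeasurableSet.iUnion fun i => IH β.1 β.2 (lt_trans β.2 hα) (s ++ [i])

/-- One-step extension: a node of rank `≥ β` for all `β < ω₁` has a child with the same
property (pigeonhole using regularity of `ω₁`). -/
lemma step_lemma {ι : Type} [Countable ι] {P : List ι → Prop} (s : List ι)
    (hs : ∀ β < ω₁, RkP P β s) : ∃ i, ∀ β < ω₁, RkP P β (s ++ [i]) := by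
  have H : ∀ β : Set.Iio ω₁, ∃ i, RkP P β.1 (s ++ [i]) := fun β =>
    ((RkP_iff P (β.1 + 1) s).mp (hs (β.1 + 1) (succ_lt_omega1 β.2))).2 β.1 (lt_add_one β.1)
  choose I hI using H
  have claim : ∃ i, ∀ β < ω₁, ∃ β' : Set.Iio ω₁, β ≤ β'.1 ∧ I β' = i := by
    by_contra hcon
    push_neg at hcon
    choose b hb hb2 using hcon
    have hsup : (⨆ i, b i) < ω₁ := sup_lt_omega1 b hb
    exact hb2 (I ⟨⨆ i, b i, hsup⟩) ⟨⨆ i, b i, hsup⟩ (Ordinal.le_iSup b _) rfl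
  obtain ⟨i, hi⟩ := claim
  refine ⟨i, fun β hβ => ?_⟩
  obtain ⟨β', hle, heq⟩ := hi β hβ
  exact (heq ▸ hI β').mono hle

/-- The canonical chain of nodes of unbounded rank. -/
noncomputable def chain {ι : Type} [Countable ι] (P : List ι → Prop)
    (h0 : ∀ β < ω₁, RkP P β []) : ℕ → {s : List ι // ∀ β < ω₁, RkP P β s}
  | 0 => ⟨[], h0⟩
  | n+1 =>
    ⟨(chain P h0 n).1 ++ [Classical.choose (step_lemma (chain P h0 n).1 (chain P h0 n).2)],
      Classical.choose_spec (step_lemma (chain P h0 n).1 (chain P h0 n).2)⟩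

noncomputable def branchOf {ι : Type} [Countable ι] (P : List ι → Prop)
    (h0 : ∀ β < ω₁, RkP P β []) : ℕ → ι := fun n =>
  Classical.choose (step_lemma (chain P h0 n).1 (chain P h0 n).2)

lemma chain_succ {ι : Type} [Countable ι] (P : List ι → Prop)
    (h0 : ∀ β < ω₁, RkP P β []) (n : ℕ) :
    (chain P h0 (n+1)).1 = (chain P h0 n).1 ++ [branchOf P h0 n] := rfl

lemma chain_length {ι : Type} [Countable ι] (P : List ι → Prop)
    (h0 : ∀ β < ω₁, RkP P β []) (n : ℕ) : (chain P h0 n).1.length = n := by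
  induction n with
  | zero => rfl
  | succ n ih => rw [chain_succ]; simp [ih]

lemma eq_chain_of_ext {ι : Type} [Countable ι] {P : List ι → Prop}
    (h0 : ∀ β < ω₁, RkP P β []) (s : List ι)
    (hext : ∀ k, (hk : k < s.length) → s[k] = branchOf P h0 k) :
    s = (chain P h0 s.length).1 := by
  induction s using List.reverseRecOn with
  | nil => rfl
  | append_singleton t i IH =>
    have hlen : (t ++ [i]).length = t.length + 1 := by simp
    have ht : t = (chain P h0 t.length).1 := by
      apply IH
      intro k hk
      have hk' : k < (t ++ [i]).length := by simp; omega
      have := hext k hk'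
      rwa [List.getElem_append_left hk] at this
    have hi : i = branchOf P h0 t.length := by
      simpa using hext t.length (by simp)
    rw [hlen, chain_succ, ← ht, ← hi]

/-- A node of rank `≥ β` for every `β < ω₁` lies on an infinite branch. -/
lemma exists_branch {ι : Type} [Countable ι] {P : List ι → Prop}
    (h0 : ∀ β < ω₁, RkP P β []) :
    ∃ b : ℕ → ι, ∀ s : List ι, (∀ k, (hk : k < s.length) → s[k] = b k) →
      ∀ β < ω₁, RkP P β s := by
  refine ⟨branchOf P h0, fun s hext β hβ => ?_⟩
  rw [eq_chain_of_ext h0 s hext]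
  exact (chain P h0 s.length).2 β hβ
/-! ### The tree of an analytic subset of `Cantor × Cantor` -/

variable (f : (ℕ → ℕ) → Cantor × Cantor)

/-- Node `s` is in the tree of `p` iff some `z` extending `s` has `f z` agreeing with `p`
up to `s.length`. -/
def Tnode (s : List ℕ) : Set (Cantor × Cantor) :=
  {p | ∃ z : ℕ → ℕ, (∀ k, (hk : k < s.length) → z k = s[k]'hk) ∧
    ∀ k < s.length, (f z).1 k = p.1 k ∧ (f z).2 k = p.2 k}

lemma Tnode_tree (s : List ℕ) (i : ℕ) {p : Cantor × Cantor}
    (h : p ∈ Tnode f (s ++ [i])) : p ∈ Tnode f s := by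
  obtain ⟨z, hz, hm⟩ := h
  refine ⟨z, fun k hk => ?_, fun k hk => ?_⟩
  · have hk' : k < (s ++ [i]).length := by simp; omega
    rw [hz k hk', List.getElem_append_left hk]
  · exact hm k (by simp; omega)

lemma Tnode_pattern (s : List ℕ) {p q : Cantor × Cantor} (h : p ∈ Tnode f s)
    (hpq : ∀ k < s.length, p.1 k = q.1 k ∧ p.2 k = q.2 k) : q ∈ Tnode f s := by
  obtain ⟨z, hz, hm⟩ := h
  exact ⟨z, hz, fun k hk => ⟨(hm k hk).1.trans (hpq k hk).1, (hm k hk).2.trans (hpq k hk).2⟩⟩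

/-- The pattern map reading the first `n` coordinates. -/
def pat (n : ℕ) : (Cantor × Cantor) → (Fin n → Bool × Bool) := fun p k => (p.1 k, p.2 k)

lemma pat_continuous (n : ℕ) : Continuous (pat n) := by
  apply continuous_pi
  intro k
  exact ((continuous_apply (k : ℕ)).comp continuous_fst).prodMk
    ((continuous_apply (k : ℕ)).comp continuous_snd)

lemma Tnode_eq_preimage (s : List ℕ) :
    Tnode f s = pat s.length ⁻¹' (pat s.length '' Tnode f s) := by
  apply Set.Subset.antisymm (Set.subset_preimage_image _ _)
  rintro q ⟨p, hp, hpq⟩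
  apply Tnode_pattern f s hp
  intro k hk
  have := congrFun hpq ⟨k, hk⟩
  simp only [pat, Prod.mk.injEq] at this
  exact this

lemma Tnode_isClosed (s : List ℕ) : IsClosed (Tnode f s) := by
  rw [Tnode_eq_preimage]
  exact (isClosed_discrete _).preimage (pat_continuous _)

lemma Tnode_measurableSet (s : List ℕ) : MeasurableSet (Tnode f s) :=
  (Tnode_isClosed f s).measurableSet

/-- If `p` admits an infinite branch through its tree, then `p` is in the range of `f`. -/
lemma mem_range_of_branch (hf : Continuous f) {p : Cantor × Cantor} (b : ℕ → ℕ)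
    (hb : ∀ n : ℕ, p ∈ Tnode f (List.ofFn fun k : Fin n => b k)) : p ∈ Set.range f := by
  -- choose witnesses
  have hw : ∀ n : ℕ, ∃ z : ℕ → ℕ, (∀ k < n, z k = b k) ∧
      ∀ k < n, (f z).1 k = p.1 k ∧ (f z).2 k = p.2 k := by
    intro n
    obtain ⟨z, hz, hm⟩ := hb n
    refine ⟨z, fun k hk => ?_, fun k hk => hm k (by simpa using hk)⟩
    have := hz k (by simpa using hk)
    simpa using this
  choose z hz1 hz2 using hw
  have hzb : Filter.Tendsto z Filter.atTop (nhds b) := by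
    rw [tendsto_pi_nhds]
    intro j
    apply Filter.Tendsto.congr' _ tendsto_const_nhds
    filter_upwards [Filter.eventually_ge_atTop (j+1)] with n hn
    exact (hz1 n j (by omega)).symm
  have hfz : Filter.Tendsto (fun n => f (z n)) Filter.atTop (nhds (f b)) :=
    (hf.tendsto b).comp hzb
  have hfb : f b = p := by
    have key : ∀ m : ℕ, (f b).1 m = p.1 m ∧ (f b).2 m = p.2 m := by
      intro m
      have hopen : IsOpen {q : Cantor × Cantor | q.1 m = (f b).1 m ∧ q.2 m = (f b).2 m} := by
        have h1 : Continuous (fun q : Cantor × Cantor => (q.1 m, q.2 m)) :=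
          ((continuous_apply m).comp continuous_fst).prodMk
            ((continuous_apply m).comp continuous_snd)
        have : {q : Cantor × Cantor | q.1 m = (f b).1 m ∧ q.2 m = (f b).2 m}
            = (fun q : Cantor × Cantor => (q.1 m, q.2 m)) ⁻¹' {((f b).1 m, (f b).2 m)} := by
          ext q; simp [Prod.ext_iff]
        rw [this]
        exact (isOpen_discrete _).preimage h1
      have hev := hfz.eventually (hopen.mem_nhds (by exact ⟨rfl, rfl⟩))
      rw [Filter.eventually_atTop] at hev
      obtain ⟨N, hN⟩ := hev
      have h1 := hN (max N (m+1)) (le_max_left _ _)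
      have h2 := hz2 (max N (m+1)) m (by omega)
      exact ⟨h1.1 ▸ h2.1, h1.2 ▸ h2.2⟩
    apply Prod.ext <;> funext m
    · exact (key m).1
    · exact (key m).2
  exact ⟨b, hfb⟩

/-- Points of `range f` have rank `≥ α` for every `α` along suitable nodes. -/
lemma rank_of_mem_range (z : ℕ → ℕ) :
    ∀ α : Ordinal.{0}, ∀ s : List ℕ, (∀ k, (hk : k < s.length) → z k = s[k]'hk) →
      RkP (fun l => f z ∈ Tnode f l) α s := by
  intro α
  induction α using Ordinal.induction with
  | h α IH =>
    intro s hs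
    rw [RkP_iff]
    constructor
    · exact ⟨z, hs, fun k hk => ⟨rfl, rfl⟩⟩
    · intro β hβ
      refine ⟨z s.length, IH β hβ _ ?_⟩
      intro k hk
      have hk' : k < s.length + 1 := by simpa using hk
      rcases Nat.lt_or_ge k s.length with h | h
      · rw [List.getElem_append_left h]; exact hs k h
      · have : k = s.length := by omega
        subst this
        simp
/-- The `α`-th Borel approximation to the analytic set `range f`. -/
def ERel (α : Ordinal.{0}) : Set (Cantor × Cantor) :=
  {p | RkP (fun l => p ∈ Tnode f l) α []}

lemma ERel_antitone {α β : Ordinal.{0}} (h : α ≤ β) : ERel f β ⊆ ERel f α :=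
  fun _ hp => hp.mono h

lemma range_subset_ERel (α : Ordinal.{0}) : Set.range f ⊆ ERel f α := by
  rintro p ⟨z, rfl⟩
  exact rank_of_mem_range f z α [] (by intro k hk; simp at hk)

lemma ERel_measurableSet {α : Ordinal.{0}} (hα : α < ω₁) : MeasurableSet (ERel f α) :=
  RkP_measurable (Tnode f) (Tnode_measurableSet f) α hα []

lemma mem_range_of_mem_iInter (hf : Continuous f) {p : Cantor × Cantor}
    (h : ∀ α < ω₁, p ∈ ERel f α) : p ∈ Set.range f := by
  obtain ⟨b, hb⟩ := exists_branch h
  apply mem_range_of_branch f hf b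
  intro n
  have hext : ∀ k, (hk : k < (List.ofFn fun j : Fin n => b j).length) →
      (List.ofFn fun j : Fin n => b j)[k]'hk = b k := by
    intro k hk
    simp
  have h1 := hb _ hext 0 (omega1_isLimit.pos)
  exact ((RkP_iff _ _ _).mp h1).1

/-! ### Product trees for transitivity -/

/-- The synchronized product tree for triples. -/
def Unode (l : List (ℕ × ℕ)) : Set (Cantor × Cantor × Cantor) :=
  {w | (w.1, w.2.1) ∈ Tnode f (l.map Prod.fst) ∧ (w.2.1, w.2.2) ∈ Tnode f (l.map Prod.snd)}

lemma Unode_isClosed (l : List (ℕ × ℕ)) : IsClosed (Unode f l) := by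
  have h1 : Continuous (fun w : Cantor × Cantor × Cantor => (w.1, w.2.1)) :=
    continuous_fst.prodMk (continuous_fst.comp continuous_snd)
  have h2 : Continuous (fun w : Cantor × Cantor × Cantor => (w.2.1, w.2.2)) :=
    (continuous_fst.comp continuous_snd).prodMk (continuous_snd.comp continuous_snd)
  exact ((Tnode_isClosed f _).preimage h1).inter ((Tnode_isClosed f _).preimage h2)

lemma Unode_tree (l : List (ℕ × ℕ)) (j : ℕ × ℕ) {w : Cantor × Cantor × Cantor}
    (h : w ∈ Unode f (l ++ [j])) : w ∈ Unode f l := by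
  obtain ⟨h1, h2⟩ := h
  rw [List.map_append] at h1 h2
  exact ⟨Tnode_tree f _ _ h1, Tnode_tree f _ _ h2⟩

/-- Rank in the product tree is the min of the component ranks. -/
lemma Unode_rank_iff : ∀ α : Ordinal.{0}, ∀ (l : List (ℕ × ℕ)) (w : Cantor × Cantor × Cantor),
    RkP (fun m => w ∈ Unode f m) α l ↔
      RkP (fun m => (w.1, w.2.1) ∈ Tnode f m) α (l.map Prod.fst) ∧
      RkP (fun m => (w.2.1, w.2.2) ∈ Tnode f m) α (l.map Prod.snd) := by
  intro α
  induction α using Ordinal.induction with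
  | h α IH =>
    intro l w
    rw [RkP_iff, RkP_iff, RkP_iff]
    constructor
    · rintro ⟨⟨hP1, hP2⟩, hch⟩
      refine ⟨⟨hP1, fun β hβ => ?_⟩, ⟨hP2, fun β hβ => ?_⟩⟩
      · obtain ⟨⟨n, m⟩, hnm⟩ := hch β hβ
        rw [IH β hβ] at hnm
        refine ⟨n, ?_⟩
        have := hnm.1
        rwa [List.map_append] at this
      · obtain ⟨⟨n, m⟩, hnm⟩ := hch β hβ
        rw [IH β hβ] at hnm
        refine ⟨m, ?_⟩
        have := hnm.2
        rwa [List.map_append] at this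
    · rintro ⟨⟨hP1, hch1⟩, ⟨hP2, hch2⟩⟩
      refine ⟨⟨hP1, hP2⟩, fun β hβ => ?_⟩
      obtain ⟨n, hn⟩ := hch1 β hβ
      obtain ⟨m, hm⟩ := hch2 β hβ
      refine ⟨(n, m), ?_⟩
      rw [IH β hβ]
      constructor
      · rw [List.map_append]; exact hn
      · rw [List.map_append]; exact hm
/-! ### The boundedness lemma -/

lemma Dpre {X ι : Type} (D : List ι → Set X)
    (htree : ∀ (s : List ι) (i : ι) (w : X), w ∈ D (s ++ [i]) → w ∈ D s) :
    ∀ (l₂ l₁ : List ι) (w : X), w ∈ D (l₁ ++ l₂) → w ∈ D l₁ := by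
  intro l₂
  induction l₂ using List.reverseRecOn with
  | nil => intro l₁ w h; simpa using h
  | append_singleton t i IH =>
    intro l₁ w h
    rw [← List.append_assoc] at h
    exact IH l₁ w (htree (l₁ ++ t) i w h)

lemma ofFn_prefix {κ : Type} (c : ℕ → κ) {m n : ℕ} (h : m ≤ n) :
    ∃ t, (List.ofFn fun k : Fin n => c k) = (List.ofFn fun k : Fin m => c k) ++ t := by
  induction n, h using Nat.le_induction with
  | base => exact ⟨[], by simp⟩
  | succ n hmn IH =>
    obtain ⟨t, ht⟩ := IH
    refine ⟨t ++ [c n], ?_⟩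
    have : (List.ofFn fun k : Fin (n+1) => c k) = (List.ofFn fun k : Fin n => c k) ++ [c n] := by
      rw [List.ofFn_succ']
      simp [List.concat_eq_append]
    rw [this, ht, List.append_assoc]

/-- Boundedness: if no point of the range of `g` admits a branch through its tree, then
the ranks of the trees are uniformly bounded below `ω₁`. -/
lemma bnd {X ι : Type} [TopologicalSpace X] [Countable ι]
    (D : List ι → Set X) (hD : ∀ s, IsClosed (D s))
    (htree : ∀ (s : List ι) (i : ι) (w : X), w ∈ D (s ++ [i]) → w ∈ D s)
    (g : (ℕ → ℕ) → X) (hg : Continuous g)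
    (hwf : ∀ z : ℕ → ℕ, ¬ ∃ b : ℕ → ι, ∀ n : ℕ, g z ∈ D (List.ofFn fun k : Fin n => b k)) :
    ∃ β < ω₁, ∀ z : ℕ → ℕ, ¬ RkP (fun s => g z ∈ D s) β [] := by
  classical
  -- the unravelled tree
  set PZ : List (ℕ × ι) → Prop := fun v =>
    ∃ z : ℕ → ℕ, (∀ k, (hk : k < v.length) → z k = (v[k]'hk).1) ∧
      g z ∈ D (v.map Prod.snd) with hPZ
  -- PZ has no infinite branch
  have hnobranch : ¬ ∀ β < ω₁, RkP PZ β [] := by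
    intro hall
    obtain ⟨bb, hbb⟩ := exists_branch hall
    have hnode : ∀ n : ℕ, PZ (List.ofFn fun k : Fin n => bb k) := by
      intro n
      have h1 := hbb (List.ofFn fun k : Fin n => bb k) (by intro k hk; simp) 0
        omega1_isLimit.pos
      exact ((RkP_iff _ _ _).mp h1).1
    choose z hz1 hz2 using hnode
    set b : ℕ → ℕ := fun j => (bb j).1 with hb
    -- z n → b
    have hzb : Filter.Tendsto z Filter.atTop (nhds b) := by
      rw [tendsto_pi_nhds]
      intro j
      apply Filter.Tendsto.congr' _ tendsto_const_nhds
      filter_upwards [Filter.eventually_ge_atTop (j+1)] with n hn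
      have hjlt : j < (List.ofFn fun k : Fin n => bb k).length := by simp; omega
      have := hz1 n j hjlt
      simp at this
      simp [hb, this]
    -- limit along the branch
    have hlim : ∀ m : ℕ, g b ∈ D (List.ofFn fun k : Fin m => (bb k).2) := by
      intro m
      have hev : ∀ n ≥ m, g (z n) ∈ D (List.ofFn fun k : Fin m => (bb k).2) := by
        intro n hn
        have h2 := hz2 n
        obtain ⟨t, ht⟩ := ofFn_prefix bb hn
        rw [ht, List.map_append] at h2
        have h3 := Dpre D htree _ _ _ h2
        rwa [List.map_ofFn] at h3
      apply (hD _).mem_of_tendsto ((hg.tendsto b).comp hzb)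
      filter_upwards [Filter.eventually_ge_atTop m] with n hn
      exact hev n hn
    exact hwf b ⟨fun k => (bb k).2, hlim⟩
  push_neg at hnobranch
  obtain ⟨β, hβ, hβfail⟩ := hnobranch
  refine ⟨β, hβ, fun z hz => ?_⟩
  -- embed the tree of `g z` into PZ
  have embed : ∀ α : Ordinal.{0}, ∀ v : List (ℕ × ι), (∀ k, (hk : k < v.length) → z k = (v[k]'hk).1) →
      RkP (fun s => g z ∈ D s) α (v.map Prod.snd) → RkP PZ α v := by
    intro α
    induction α using Ordinal.induction with
    | h α IH =>
      intro v hv h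
      rw [RkP_iff] at h ⊢
      refine ⟨⟨z, hv, h.1⟩, fun γ hγ => ?_⟩
      obtain ⟨i, hi⟩ := h.2 γ hγ
      refine ⟨(z v.length, i), IH γ hγ (v ++ [(z v.length, i)]) ?_ ?_⟩
      · intro k hk
        have hk' : k < v.length + 1 := by simpa using hk
        rcases Nat.lt_or_ge k v.length with hlt | hge
        · rw [List.getElem_append_left hlt]; exact hv k hlt
        · have : k = v.length := by omega
          subst this; simp
      · rw [List.map_append]; exact hi
  exact hβfail (embed β [] (by intro k hk; simp at hk) hz)
lemma sup_lt_omega1' {κ : Type 1} [Countable κ] (F : κ → Ordinal.{0})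
    (hF : ∀ i, F i < ω₁) : (⨆ i, F i) < ω₁ := by
  rcases isEmpty_or_nonempty κ with h | h
  · rw [ciSup_of_empty F]
    exact omega1_isLimit.pos
  · obtain ⟨e, he⟩ := exists_surjective_nat κ
    rw [← he.iSup_comp]
    exact sup_lt_omega1 (fun n => F (e n)) (fun n => hF (e n))

/-- The key boundedness lemma: for every `α < ω₁` there is `β < ω₁` such that the `β`-th
approximation composed with itself is inside the `α`-th approximation. -/
lemma keyL (hf : Continuous f)
    (htrans : ∀ x y z : Cantor, (x, y) ∈ Set.range f → (y, z) ∈ Set.range f →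
      (x, z) ∈ Set.range f)
    {α : Ordinal.{0}} (hα : α < ω₁) :
    ∃ β < ω₁, ∀ x y z : Cantor,
      (x, y) ∈ ERel f β → (y, z) ∈ ERel f β → (x, z) ∈ ERel f α := by
  classical
  set W : Set (Cantor × Cantor × Cantor) := {w | (w.1, w.2.2) ∉ ERel f α} with hW
  have hq : Measurable (fun w : Cantor × Cantor × Cantor => (w.1, w.2.2)) :=
    (measurable_fst.prodMk (measurable_snd.comp measurable_snd))
  have hWm : MeasurableSet W := hq ((ERel_measurableSet f hα).compl)
  haveI : PolishSpace (Cantor × Cantor × Cantor) := {}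
  have hWa := hWm.analyticSet
  rw [AnalyticSet] at hWa
  rcases hWa with hWe | ⟨g, hg, hrange⟩
  · -- W empty : every pair is already in ERel α
    refine ⟨α, hα, fun x y z _ _ => ?_⟩
    by_contra hc
    have : (x, y, z) ∈ W := hc
    rw [hWe] at this
    exact this
  · have hwf : ∀ z₀ : ℕ → ℕ, ¬ ∃ b : ℕ → ℕ × ℕ,
        ∀ n : ℕ, g z₀ ∈ Unode f (List.ofFn fun k : Fin n => b k) := by
      rintro z₀ ⟨bb, hbb⟩
      have hgz : g z₀ ∈ W := hrange ▸ Set.mem_range_self z₀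
      have h1 : ((g z₀).1, (g z₀).2.1) ∈ Set.range f := by
        apply mem_range_of_branch f hf (fun k => (bb k).1)
        intro n
        have := (hbb n).1
        rwa [List.map_ofFn] at this
      have h2 : ((g z₀).2.1, (g z₀).2.2) ∈ Set.range f := by
        apply mem_range_of_branch f hf (fun k => (bb k).2)
        intro n
        have := (hbb n).2
        rwa [List.map_ofFn] at this
      have h3 := htrans _ _ _ h1 h2
      exact hgz (range_subset_ERel f α h3)
    obtain ⟨β', hβ', hall⟩ := bnd (Unode f) (Unode_isClosed f) (fun s i w => Unode_tree f s i)
      g hg hwf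
    refine ⟨max α β', max_lt hα hβ', fun x y z hxy hyz => ?_⟩
    by_contra hc
    have hmemW : (x, y, z) ∈ W := hc
    rw [← hrange] at hmemW
    obtain ⟨z₀, hz₀⟩ := hmemW
    apply hall z₀
    rw [hz₀]
    rw [Unode_rank_iff]
    exact ⟨hxy.mono (le_max_right α β'), hyz.mono (le_max_right α β')⟩

/-- The symmetrized approximations. -/
def SymRel (α : Ordinal.{0}) : Set (Cantor × Cantor) :=
  {p | p ∈ ERel f α ∧ (p.2, p.1) ∈ ERel f α}

lemma SymRel_antitone {α β : Ordinal.{0}} (h : α ≤ β) : SymRel f β ⊆ SymRel f α :=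
  fun p hp => ⟨ERel_antitone f h hp.1, ERel_antitone f h hp.2⟩

lemma keyL2 (hf : Continuous f)
    (htrans : ∀ x y z : Cantor, (x, y) ∈ Set.range f → (y, z) ∈ Set.range f →
      (x, z) ∈ Set.range f)
    {α : Ordinal.{0}} (hα : α < ω₁) :
    ∃ β < ω₁, ∀ x y z : Cantor,
      (x, y) ∈ SymRel f β → (y, z) ∈ SymRel f β → (x, z) ∈ SymRel f α := by
  obtain ⟨β, hβ, hprop⟩ := keyL f hf htrans hα
  exact ⟨β, hβ, fun x y z hxy hyz =>
    ⟨hprop x y z hxy.1 hyz.1, hprop z y x hyz.2 hxy.2⟩⟩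

/-- Good closure points. -/
def goodPt (G : Ordinal.{0} → Ordinal.{0}) (δ : Ordinal.{0}) : Prop :=
  0 < δ ∧ δ < ω₁ ∧ (∀ β < δ, ∃ γ, β < γ ∧ γ < δ) ∧ ∀ ξ < δ, G ξ < δ

lemma exists_goodPt (G : Ordinal.{0} → Ordinal.{0}) (hG : ∀ γ < ω₁, G γ < ω₁)
    {γ : Ordinal.{0}} (hγ : γ < ω₁) : ∃ δ, goodPt G δ ∧ γ < δ := by
  classical
  set m : ℕ → Ordinal.{0} := fun k => Nat.rec (γ + 1)
    (fun _ ih => max (⨆ ξ : Set.Iio ih, (G ξ.1 + 1)) (ih + 1)) k with hm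
  have hm0 : m 0 = γ + 1 := rfl
  have hmsucc : ∀ k, m (k + 1) = max (⨆ ξ : Set.Iio (m k), (G ξ.1 + 1)) (m k + 1) :=
    fun k => rfl
  have hmlt : ∀ k, m k < ω₁ := by
    intro k
    induction k with
    | zero => rw [hm0]; exact succ_lt_omega1 hγ
    | succ k ih =>
      rw [hmsucc]
      haveI := countable_Iio_of_lt_omega1 ih
      apply max_lt _ (succ_lt_omega1 ih)
      exact sup_lt_omega1' _ (fun ξ => succ_lt_omega1 (hG ξ.1 (lt_trans ξ.2 ih)))
  have hmono : ∀ k, m k < m (k + 1) := by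
    intro k
    rw [hmsucc]
    exact lt_of_lt_of_le (lt_add_one (m k)) (le_max_right _ _)
  have hmle : ∀ k, m k ≤ ⨆ j, m j := fun k => Ordinal.le_iSup m k
  refine ⟨⨆ j, m j, ⟨?_, ?_, ?_, ?_⟩, ?_⟩
  · exact lt_of_lt_of_le (lt_of_le_of_lt (zero_le (a := γ)) (lt_add_one γ))
      (hm0 ▸ hmle 0)
  · exact sup_lt_omega1 m hmlt
  · intro β hβ
    obtain ⟨k, hk⟩ := Ordinal.lt_iSup_iff.mp hβ
    exact ⟨m k, hk, lt_of_lt_of_le (hmono k) (hmle (k + 1))⟩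
  · intro ξ hξ
    obtain ⟨k, hk⟩ := Ordinal.lt_iSup_iff.mp hξ
    have h1 : G ξ + 1 ≤ ⨆ ζ : Set.Iio (m k), (G ζ.1 + 1) :=
      Ordinal.le_iSup (fun ζ : Set.Iio (m k) => G ζ.1 + 1) ⟨ξ, hk⟩
    have h2 : G ξ + 1 ≤ m (k + 1) := le_trans h1 ((hmsucc k) ▸ le_max_left _ _)
    exact lt_of_lt_of_le (lt_of_lt_of_le (lt_add_one (G ξ)) h2) (hmle (k + 1))
  · exact lt_of_lt_of_le (lt_add_one γ) (hm0 ▸ hmle 0)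
noncomputable def chooseGood (G : Ordinal.{0} → Ordinal.{0}) (γ : Ordinal.{0}) : Ordinal.{0} :=
  @dite _ (∃ δ, goodPt G δ ∧ γ < δ) (Classical.dec _) (fun h => h.choose) (fun _ => 0)

lemma chooseGood_spec {G : Ordinal.{0} → Ordinal.{0}} {γ : Ordinal.{0}}
    (h : ∃ δ, goodPt G δ ∧ γ < δ) : goodPt G (chooseGood G γ) ∧ γ < chooseGood G γ := by
  rw [chooseGood]
  rw [dif_pos h]
  exact h.choose_spec

/-- The increasing enumeration of good points. -/
noncomputable def cFun (G : Ordinal.{0} → Ordinal.{0}) : Ordinal.{0} → Ordinal.{0}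
  | α => chooseGood G (max (α + 1) (⨆ β : Set.Iio α, (cFun G β.1 + 1)))
termination_by α => α
decreasing_by exact β.2

lemma cFun_eq (G : Ordinal.{0} → Ordinal.{0}) (α : Ordinal.{0}) :
    cFun G α = chooseGood G (max (α + 1) (⨆ β : Set.Iio α, (cFun G β.1 + 1))) := by
  rw [cFun]

lemma cFun_spec (G : Ordinal.{0} → Ordinal.{0}) (hG : ∀ γ < ω₁, G γ < ω₁) :
    ∀ α < ω₁, goodPt G (cFun G α) ∧ α < cFun G α ∧ ∀ β < α, cFun G β < cFun G α := by
  intro α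
  induction α using Ordinal.induction with
  | h α IH =>
    intro hα
    haveI := countable_Iio_of_lt_omega1 hα
    set S := max (α + 1) (⨆ β : Set.Iio α, (cFun G β.1 + 1)) with hSdef
    have hS : S < ω₁ := by
      apply max_lt (succ_lt_omega1 hα)
      exact sup_lt_omega1' _ (fun β =>
        succ_lt_omega1 (IH β.1 β.2 (lt_trans β.2 hα)).1.2.1)
    obtain ⟨hgood, hlt⟩ := chooseGood_spec (exists_goodPt G hG hS)
    rw [← cFun_eq] at hgood hlt
    refine ⟨hgood, ?_, ?_⟩
    · exact lt_trans (lt_of_lt_of_le (lt_add_one α) (le_max_left _ _)) hlt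
    · intro β hβ
      have h1 : cFun G β + 1 ≤ ⨆ β' : Set.Iio α, (cFun G β'.1 + 1) :=
        Ordinal.le_iSup (fun β' : Set.Iio α => cFun G β'.1 + 1) ⟨β, hβ⟩
      have h2 : cFun G β + 1 ≤ S := le_trans h1 (le_max_right _ _)
      exact lt_trans (lt_of_lt_of_le (lt_add_one _) h2) hlt

lemma SymRel_limit {δ : Ordinal.{0}} (h0 : 0 < δ)
    (hlim : ∀ β < δ, ∃ γ, β < γ ∧ γ < δ) {p : Cantor × Cantor} :
    p ∈ SymRel f δ ↔ ∀ γ < δ, p ∈ SymRel f γ := by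
  constructor
  · exact fun h γ hγ => SymRel_antitone f hγ.le h
  · intro h
    exact ⟨(RkP_limit h0 hlim _).mpr fun γ hγ => (h γ hγ).1,
      (RkP_limit h0 hlim _).mpr fun γ hγ => (h γ hγ).2⟩

lemma goodPt_trans (G : Ordinal.{0} → Ordinal.{0})
    (hGprop : ∀ γ, γ < ω₁ → ∀ x y z : Cantor, (x, y) ∈ SymRel f (G γ) →
      (y, z) ∈ SymRel f (G γ) → (x, z) ∈ SymRel f γ)
    {δ : Ordinal.{0}} (hδ : goodPt G δ) :
    ∀ x y z : Cantor, (x, y) ∈ SymRel f δ → (y, z) ∈ SymRel f δ → (x, z) ∈ SymRel f δ := by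
  obtain ⟨h0, hω, hlim, hcl⟩ := hδ
  intro x y z hxy hyz
  rw [SymRel_limit f h0 hlim]
  intro γ hγ
  have hGγ : G γ < δ := hcl γ hγ
  exact hGprop γ (lt_trans hγ hω) x y z
    (SymRel_antitone f hGγ.le hxy) (SymRel_antitone f hGγ.le hyz)

end Burgess

/-- For every analytic equivalence relation `E` on Cantor space there is a
family `(E_α)` indexed by the countable ordinals `α < ω₁` of equivalence relations on `2^ω`
such that: (i) each `E_α` is Borel; (ii) the family is decreasing (`α ≤ β < ω₁` implies
`E_β ⊆ E_α`); and (iii) `E = ⋂_{α < ω₁} E_α`. -/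
theorem statement12 (E : Set (Cantor × Cantor)) (hE : AnalyticSet E)
    (heq : Equivalence fun X Y : Cantor => (X, Y) ∈ E) :
    ∃ F : Ordinal.{0} → Set (Cantor × Cantor),
      (∀ α < (Cardinal.aleph 1).ord, Equivalence fun X Y : Cantor => (X, Y) ∈ F α) ∧
      (∀ α < (Cardinal.aleph 1).ord, MeasurableSet[borel (Cantor × Cantor)] (F α)) ∧
      (∀ α β : Ordinal.{0}, α ≤ β → β < (Cardinal.aleph 1).ord → F β ⊆ F α) ∧
      (∀ X Y : Cantor, (X, Y) ∈ E ↔ ∀ α < (Cardinal.aleph 1).ord, (X, Y) ∈ F α) := by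
  classical
  have hω₁ : (Cardinal.aleph 1).ord = ω₁ := rfl
  have hEne : E ≠ ∅ := by
    intro h
    have := heq.refl (fun _ => false)
    rw [h] at this
    exact this
  rw [AnalyticSet] at hE
  rcases hE with h | ⟨f, hf, hrange⟩
  · exact absurd h hEne
  subst hrange
  have htrans : ∀ x y z : Cantor, (x, y) ∈ Set.range f → (y, z) ∈ Set.range f →
      (x, z) ∈ Set.range f := fun x y z hxy hyz => heq.trans hxy hyz
  have hsub : ∀ γ : Ordinal.{0}, ∀ p : Cantor × Cantor, p ∈ Set.range f → p ∈ SymRel f γ := by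
    intro γ p hp
    have hp1 : (p.1, p.2) ∈ Set.range f := by rwa [Prod.mk.eta]
    exact ⟨range_subset_ERel f γ (by rwa [Prod.mk.eta] at hp1), range_subset_ERel f γ (heq.symm hp1)⟩
  set G : Ordinal.{0} → Ordinal.{0} := fun γ =>
    if h : γ < ω₁ then (keyL2 f hf htrans h).choose else 0 with hGdef
  have hG : ∀ γ < ω₁, G γ < ω₁ := by
    intro γ hγ
    rw [hGdef]; simp only [dif_pos hγ]
    exact (keyL2 f hf htrans hγ).choose_spec.1
  have hGprop : ∀ γ, γ < ω₁ → ∀ x y z : Cantor, (x, y) ∈ SymRel f (G γ) →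
      (y, z) ∈ SymRel f (G γ) → (x, z) ∈ SymRel f γ := by
    intro γ hγ
    have : G γ = (keyL2 f hf htrans hγ).choose := by rw [hGdef]; simp only [dif_pos hγ]
    rw [this]
    exact (keyL2 f hf htrans hγ).choose_spec.2
  have hc := cFun_spec G hG
  refine ⟨fun α => SymRel f (cFun G α), ?_, ?_, ?_, ?_⟩
  · -- equivalence relations
    intro α hα
    rw [hω₁] at hα
    constructor
    · exact fun X => hsub _ _ (heq.refl X)
    · exact fun {X Y} h => ⟨h.2, h.1⟩
    · exact fun {X Y Z} h1 h2 => goodPt_trans f G hGprop (hc α hα).1 X Y Z h1 h2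
  · -- Borel
    intro α hα
    rw [hω₁] at hα
    have hmeq : (inferInstance : MeasurableSpace (Cantor × Cantor)) = borel (Cantor × Cantor) :=
      BorelSpace.measurable_eq
    rw [← hmeq]
    have hδ : cFun G α < ω₁ := (hc α hα).1.2.1
    have h1 := ERel_measurableSet f hδ
    have h2 : MeasurableSet (Prod.swap ⁻¹' ERel f (cFun G α)) :=
      measurable_swap h1
    show MeasurableSet (SymRel f (cFun G α))
    have : SymRel f (cFun G α) = ERel f (cFun G α) ∩ Prod.swap ⁻¹' ERel f (cFun G α) := rfl
    rw [this]
    exact h1.inter h2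
  · -- decreasing
    intro α β hαβ hβ
    rw [hω₁] at hβ
    rcases eq_or_lt_of_le hαβ with rfl | hlt
    · exact fun p hp => hp
    · exact SymRel_antitone f ((hc β hβ).2.2 α hlt).le
  · -- intersection
    intro X Y
    constructor
    · intro h α _
      exact hsub _ _ h
    · intro h
      apply mem_range_of_mem_iInter f hf
      intro γ hγ
      have h1 := h γ (hω₁ ▸ hγ)
      have h2 : γ ≤ cFun G γ := (hc γ hγ).2.1.le
      exact (SymRel_antitone f h2 h1).1
end

section
/- Let E be an equivalence relation on Cantor space represented by a swap-closed triple tree T, and let C ⊆ 2^ω be a nonempty perfect set (closed and without isolated points) such that any two distinct elements of C are E-inequivalent. Then there exists a countable ordinal α such that for all X, Y ∈ C with X ≠ Y, it is not the case that rk(T̂_{X,Y}) ≥ α; that is, all distinct elements of C are pairwise E_α-inequivalent for this single α < ω₁. -/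
open MeasureTheory

/-! ### Auxiliary development for statement13 -/

namespace Statement13Aux

open Ordinal

theorem res_length (X : Cantor) (n : ℕ) : (res X n).length = n := by simp [res]

theorem res_getElem (X : Cantor) {n m : ℕ} (h : m < n) :
    (res X n)[m]'(by simpa [res_length] using h) = X m := by
  simp [res]

theorem res_take (X : Cantor) {m n : ℕ} (h : m ≤ n) : (res X n).take m = res X m := by
  apply List.ext_getElem
  · simp [res_length, h]
  · intro i h1 h2
    simp [res]

theorem res_prefix (X : Cantor) {m n : ℕ} (h : m ≤ n) : res X m <+: res X n := by
  rw [← res_take X h]; exact List.take_prefix _ _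

theorem eq_of_res_eq {Z X : Cantor} {n m : ℕ} (h : res Z n = res X n) (hm : m < n) :
    Z m = X m := by
  have h1 := res_getElem Z hm
  have h2 := res_getElem X hm
  rw [← h1, ← h2]
  exact List.getElem_of_eq h _

theorem pref_getElem {α : Type*} {l₁ l₂ : List α} (h : l₁ <+: l₂ ∨ l₂ <+: l₁) {m : ℕ}
    (h1 : m < l₁.length) (h2 : m < l₂.length) : l₁[m] = l₂[m] := by
  rcases h with h | h
  · exact h.getElem h1
  · exact (h.getElem h2).symm

theorem listlt_length {α : Type*} {l₁ l₂ : List α} (h : ListLt l₁ l₂) :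
    l₁.length < l₂.length := by
  rcases h with ⟨hp, hne⟩
  rcases Nat.lt_or_ge l₁.length l₂.length with h | h
  · exact h
  · exact absurd (hp.eq_of_length (le_antisymm hp.length_le h)) hne

/-- A point all of whose restrictions are restrictions of members of a closed set
belongs to the set. -/
theorem mem_of_res_approx {C : Set Cantor} (hC : IsClosed C) (X : Cantor)
    (h : ∀ n, ∃ Z ∈ C, res Z n = res X n) : X ∈ C := by
  by_contra hX
  have hopen : IsOpen Cᶜ := hC.isOpen_compl
  rw [isOpen_pi_iff] at hopen
  obtain ⟨I, u, hu, hsub⟩ := hopen X hX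
  obtain ⟨Z, hZ, hres⟩ := h (I.sup id + 1)
  have hmem : Z ∈ (I : Set ℕ).pi u := by
    intro i hi
    have hlt : i < I.sup id + 1 := Nat.lt_succ_of_le (Finset.le_sup (f := id) hi)
    rw [eq_of_res_eq hres hlt]
    exact (hu i hi).2
  exact hsub hmem hZ

/-- Unfolding lemma for `RankGe`. -/
theorem rankGe_iff {A : Type*} (S : Set A) (lt : A → A → Prop) (u : A) (α : Ordinal.{0}) :
    RankGe S lt u α ↔ ∀ β : Ordinal.{0}, β < α → ∃ v, v ∈ S ∧ lt u v ∧ RankGe S lt v β := by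
  rw [RankGe]

theorem RankGe.mono {A : Type*} {S : Set A} {lt : A → A → Prop} {u : A} {α β : Ordinal.{0}}
    (h : RankGe S lt u α) (hb : β ≤ α) : RankGe S lt u β := by
  rw [rankGe_iff] at h ⊢
  exact fun β' h' => h β' (h'.trans_le hb)

/-- The type of nodes of the amalgamated tree `W`. -/
abbrev WA : Type := ℕ × List Bool × List Bool × KNode

/-- Boundary sequences relative to finite approximations `a`, `b`. -/
def bdryF (a b : List Bool) (k : ℕ) (u : KNode) (i : ℕ) : List Bool :=
  if i = 0 then a else if i = k then b else col2 u (i - 1)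

theorem bdry_eq_bdryF (X Y : Cantor) (k : ℕ) (u : KNode) (i : ℕ) :
    bdry X Y k u i = bdryF (res X u.length) (res Y u.length) k u i := rfl

/-- The amalgamated tree `W`: nodes are `(k, a, b, u)` with `a ≠ b` finite approximations to
points of `C` and `u` a node of the `k`-fold composition tree over `(a, b)`. -/
def WSet (T : Set Trip) (C : Set Cantor) : Set WA :=
  {p | 1 ≤ p.1 ∧ p.2.1.length = p.2.2.2.length ∧ p.2.2.1.length = p.2.2.2.length ∧
    p.2.1 ≠ p.2.2.1 ∧
    (∃ Z ∈ C, res Z p.2.1.length = p.2.1) ∧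
    (∃ Z ∈ C, res Z p.2.2.1.length = p.2.2.1) ∧
    (∀ e ∈ p.2.2.2, e.1.length = p.1 ∧ e.2.length = p.1 - 1) ∧
    (∀ i < p.1, (bdryF p.2.1 p.2.2.1 p.1 p.2.2.2 i, col1 p.2.2.2 i,
        bdryF p.2.1 p.2.2.1 p.1 p.2.2.2 (i + 1)) ∈ T)}

/-- `WRel v u`: `v` is a proper coordinatewise extension of `u` inside `W`. -/
def WRel (T : Set Trip) (C : Set Cantor) (v u : WA) : Prop :=
  v ∈ WSet T C ∧ u ∈ WSet T C ∧ v.1 = u.1 ∧ u.2.1 <+: v.2.1 ∧ u.2.2.1 <+: v.2.2.1 ∧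
    u.2.2.2 <+: v.2.2.2 ∧ u.2.2.2.length < v.2.2.2.length

end Statement13Aux

namespace Statement13Aux

theorem wrel_wf {E : Set (Cantor × Cantor)} {T : Set Trip} {C : Set Cantor}
    (hT : IsTripleTree T) (hrep : Represents T E)
    (hE : Equivalence fun X Y : Cantor => (X, Y) ∈ E)
    (hC : IsClosed C)
    (hineq : ∀ X ∈ C, ∀ Y ∈ C, X ≠ Y → (X, Y) ∉ E) :
    WellFounded (WRel T C) := by
  haveI : IsIrrefl WA (WRel T C) := ⟨fun a h => Nat.lt_irrefl _ h.2.2.2.2.2.2⟩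
  haveI : IsTrans WA (WRel T C) := ⟨fun a b c hab hbc =>
    ⟨hab.1, hbc.2.1, hab.2.2.1.trans hbc.2.2.1, hbc.2.2.2.1.trans hab.2.2.2.1,
      hbc.2.2.2.2.1.trans hab.2.2.2.2.1, hbc.2.2.2.2.2.1.trans hab.2.2.2.2.2.1,
      Nat.lt_trans hbc.2.2.2.2.2.2 hab.2.2.2.2.2.2⟩⟩
  haveI : IsStrictOrder WA (WRel T C) := { }
  rw [RelEmbedding.wellFounded_iff_isEmpty]
  constructor
  intro g
  set f : ℕ → WA := fun n => g n with hfdef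
  have hstep : ∀ n, WRel T C (f (n + 1)) (f n) := fun n => g.map_rel_iff.mpr (Nat.lt_succ_self n)
  have hmem : ∀ n, f n ∈ WSet T C := fun n => (hstep n).2.1
  set k := (f 0).1 with hkdef
  have hk : ∀ n, (f n).1 = k := by
    intro n; induction n with
    | zero => rfl
    | succ n ih => rw [(hstep n).2.2.1, ih]
  have hk1 : 1 ≤ k := by rw [hkdef]; exact (hmem 0).1
  set L : ℕ → ℕ := fun n => (f n).2.2.2.length with hLdef
  have haL : ∀ n, (f n).2.1.length = L n := fun n => (hmem n).2.1
  have hbL : ∀ n, (f n).2.2.1.length = L n := fun n => (hmem n).2.2.1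
  have hLmono : ∀ n, L n < L (n + 1) := fun n => (hstep n).2.2.2.2.2.2
  have hL : ∀ n, n ≤ L n := by
    intro n; induction n with
    | zero => exact Nat.zero_le _
    | succ n ih => exact Nat.lt_of_le_of_lt ih (hLmono n)
  have hchain_a : ∀ {p q : ℕ}, p ≤ q → (f p).2.1 <+: (f q).2.1 := by
    intro p q h
    induction h with
    | refl => exact List.prefix_refl _
    | step h ih => exact ih.trans (hstep _).2.2.2.1
  have hchain_b : ∀ {p q : ℕ}, p ≤ q → (f p).2.2.1 <+: (f q).2.2.1 := by
    intro p q h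
    induction h with
    | refl => exact List.prefix_refl _
    | step h ih => exact ih.trans (hstep _).2.2.2.2.1
  have hchain_u : ∀ {p q : ℕ}, p ≤ q → (f p).2.2.2 <+: (f q).2.2.2 := by
    intro p q h
    induction h with
    | refl => exact List.prefix_refl _
    | step h ih => exact ih.trans (hstep _).2.2.2.2.2.1
  have hcomp_a : ∀ p q : ℕ, (f p).2.1 <+: (f q).2.1 ∨ (f q).2.1 <+: (f p).2.1 := by
    intro p q
    rcases le_total p q with h | h
    · exact Or.inl (hchain_a h)
    · exact Or.inr (hchain_a h)
  have hcomp_b : ∀ p q : ℕ, (f p).2.2.1 <+: (f q).2.2.1 ∨ (f q).2.2.1 <+: (f p).2.2.1 := by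
    intro p q
    rcases le_total p q with h | h
    · exact Or.inl (hchain_b h)
    · exact Or.inr (hchain_b h)
  have hcomp_u : ∀ p q : ℕ, (f p).2.2.2 <+: (f q).2.2.2 ∨ (f q).2.2.2 <+: (f p).2.2.2 := by
    intro p q
    rcases le_total p q with h | h
    · exact Or.inl (hchain_u h)
    · exact Or.inr (hchain_u h)
  -- the limit points and the limit node
  set X : Cantor := fun m => ((f (m + 1)).2.1).getD m false with hXdef
  set Y : Cantor := fun m => ((f (m + 1)).2.2.1).getD m false with hYdef
  set U : ℕ → List ℕ × List Bool := fun m => ((f (m + 1)).2.2.2).getD m ([], []) with hUdef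
  have hXval : ∀ (p m : ℕ) (h : m < L p), ((f p).2.1)[m]'(by rw [haL]; exact h) = X m := by
    intro p m h
    have h1 : m < (f (m + 1)).2.1.length := by rw [haL]; exact Nat.lt_of_lt_of_le (Nat.lt_succ_self m) (hL (m + 1))
    have : X m = ((f (m + 1)).2.1)[m]'h1 := by
      rw [hXdef]; exact List.getD_eq_getElem _ _ h1
    rw [this]
    exact pref_getElem (hcomp_a p (m + 1)) (by rw [haL]; exact h) h1
  have hYval : ∀ (p m : ℕ) (h : m < L p), ((f p).2.2.1)[m]'(by rw [hbL]; exact h) = Y m := by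
    intro p m h
    have h1 : m < (f (m + 1)).2.2.1.length := by rw [hbL]; exact Nat.lt_of_lt_of_le (Nat.lt_succ_self m) (hL (m + 1))
    have : Y m = ((f (m + 1)).2.2.1)[m]'h1 := by
      rw [hYdef]; exact List.getD_eq_getElem _ _ h1
    rw [this]
    exact pref_getElem (hcomp_b p (m + 1)) (by rw [hbL]; exact h) h1
  have hUval : ∀ (p m : ℕ) (h : m < L p), ((f p).2.2.2)[m]'h = U m := by
    intro p m h
    have h1 : m < (f (m + 1)).2.2.2.length := Nat.lt_of_lt_of_le (Nat.lt_succ_self m) (hL (m + 1))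
    have : U m = ((f (m + 1)).2.2.2)[m]'h1 := by
      rw [hUdef]; exact List.getD_eq_getElem _ _ h1
    rw [this]
    exact pref_getElem (hcomp_u p (m + 1)) h h1
  -- residue computations
  have hresX : ∀ (n p : ℕ), n ≤ L p → res X n = ((f p).2.1).take n := by
    intro n p hnp
    apply List.ext_getElem
    · simp [res_length, haL]; omega
    · intro i h1 h2
      have hin : i < n := by simpa [res_length] using h1
      rw [res_getElem X hin, List.getElem_take]
      exact (hXval p i (Nat.lt_of_lt_of_le hin hnp)).symm
  have hresY : ∀ (n p : ℕ), n ≤ L p → res Y n = ((f p).2.2.1).take n := by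
    intro n p hnp
    apply List.ext_getElem
    · simp [res_length, hbL]; omega
    · intro i h1 h2
      have hin : i < n := by simpa [res_length] using h1
      rw [res_getElem Y hin, List.getElem_take]
      exact (hYval p i (Nat.lt_of_lt_of_le hin hnp)).symm
  -- the interpolating sequence
  set Bd : ℕ → Cantor := fun i =>
    if i = 0 then X else if i = k then Y else fun m => (U m).2.getD (i - 1) false with hBd
  set G : ℕ → ℕ → ℕ := fun i m => (U m).1.getD i 0 with hG
  have hresMid : ∀ (j n p : ℕ), n ≤ L p → 0 < j →
      res (fun m => (U m).2.getD (j - 1) false) n = (col2 (f p).2.2.2 (j - 1)).take n := by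
    intro j n p hnp hj
    have hnp' : n ≤ ((f p).2.2.2).length := hnp
    apply List.ext_getElem
    · simp [res_length, col2]; omega
    · intro i h1 h2
      have hin : i < n := by simpa [res_length] using h1
      rw [res_getElem _ hin, List.getElem_take]
      have h3 : i < ((f p).2.2.2).length := Nat.lt_of_lt_of_le hin hnp
      simp only [col2, List.getElem_map]
      rw [hUval p i h3]
  have hresBd : ∀ (j n p : ℕ), n ≤ L p → j ≤ k →
      res (Bd j) n = (bdryF (f p).2.1 (f p).2.2.1 k (f p).2.2.2 j).take n := by
    intro j n p hnp hjk
    rcases Nat.eq_zero_or_pos j with rfl | hj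
    · rw [hBd]; simp only [if_pos rfl, bdryF, if_pos rfl]
      exact hresX n p hnp
    · have hj0 : j ≠ 0 := Nat.pos_iff_ne_zero.mp hj
      rcases eq_or_ne j k with rfl | hjk'
      · rw [hBd]; simp only [if_neg hj0, if_pos rfl, bdryF]
        exact hresY n p hnp
      · rw [hBd]; simp only [if_neg hj0, if_neg hjk', bdryF]
        exact hresMid j n p hnp hj
  have hresG : ∀ (i n p : ℕ), n ≤ L p →
      (List.range n).map (G i) = (col1 (f p).2.2.2 i).take n := by
    intro i n p hnp
    have hnp' : n ≤ ((f p).2.2.2).length := hnp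
    apply List.ext_getElem
    · simp [col1]; omega
    · intro j h1 h2
      have hjn : j < n := by simpa using h1
      have h3 : j < ((f p).2.2.2).length := Nat.lt_of_lt_of_le hjn hnp
      rw [List.getElem_take]
      simp only [List.getElem_map, List.getElem_range, col1]
      rw [hG, hUval p j h3]
  -- adjacent pairs are E-related
  have hadj : ∀ i, i < k → (Bd i, Bd (i + 1)) ∈ E := by
    intro i hik
    rw [hrep]
    refine ⟨G i, fun n => ?_⟩
    have hmemn := (hmem n).2.2.2.2.2.2.2
    rw [hk n] at hmemn
    have hTn := hT.2 _ (hmemn i hik) n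
    have hnL : n ≤ L n := hL n
    rw [hresBd i n n hnL (Nat.le_of_lt hik), hresBd (i + 1) n n hnL hik,
      hresG i n n hnL]
    exact hTn
  -- chain up
  have hchainE : ∀ i, i ≤ k → (Bd 0, Bd i) ∈ E := by
    intro i
    induction i with
    | zero => intro _; exact hE.refl _
    | succ i ih =>
      intro h
      exact hE.trans (ih (Nat.le_of_succ_le h)) (hadj i h)
  have hk0 : k ≠ 0 := by omega
  have hBd0 : Bd 0 = X := by simp [hBd]
  have hBdk : Bd k = Y := by simp [hBd, hk0]
  have hXY : (X, Y) ∈ E := by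
    have := hchainE k le_rfl
    rwa [hBd0, hBdk] at this
  -- X and Y belong to C
  have hXC : X ∈ C := by
    apply mem_of_res_approx hC
    intro n
    obtain ⟨Z, hZ, hres⟩ := (hmem n).2.2.2.2.1
    refine ⟨Z, hZ, ?_⟩
    have h1 : res Z n = (res Z ((f n).2.1.length)).take n := by
      rw [res_take]; rw [haL]; exact hL n
    rw [h1, hres, ← hresX n n (hL n)]
  have hYC : Y ∈ C := by
    apply mem_of_res_approx hC
    intro n
    obtain ⟨Z, hZ, hres⟩ := (hmem n).2.2.2.2.2.1
    refine ⟨Z, hZ, ?_⟩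
    have h1 : res Z n = (res Z ((f n).2.2.1.length)).take n := by
      rw [res_take]; rw [hbL]; exact hL n
    rw [h1, hres, ← hresY n n (hL n)]
  -- X ≠ Y
  have hne : X ≠ Y := by
    have hab : (f 0).2.1 ≠ (f 0).2.2.1 := (hmem 0).2.2.2.1
    have hlen : (f 0).2.1.length = (f 0).2.2.1.length := by rw [haL, hbL]
    have : ∃ m, ∃ (h : m < L 0), ((f 0).2.1)[m]'(by rw [haL]; exact h) ≠
        ((f 0).2.2.1)[m]'(by rw [hbL]; exact h) := by
      by_contra hcon
      push_neg at hcon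
      apply hab
      apply List.ext_getElem hlen
      intro i hi1 hi2
      exact hcon i (by rw [← haL]; exact hi1)
    obtain ⟨m, hm, hmne⟩ := this
    intro hxy
    apply hmne
    rw [hXval 0 m hm, hYval 0 m hm, hxy]
  exact hineq X hXC Y hYC hne hXY

end Statement13Aux

namespace Statement13Aux

open Ordinal Cardinal

theorem rank_lt_omega1 {α : Type} [Countable α] {r : α → α → Prop} [IsWellFounded α r] (a : α) :
    IsWellFounded.rank r a < (Cardinal.aleph 1).ord := by
  induction a using IsWellFounded.induction r with
  | ind a ih =>
    rw [IsWellFounded.rank_eq]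
    rw [Cardinal.ord_aleph]
    apply Ordinal.iSup_lt_omega_one
    intro b
    exact (Cardinal.isSuccLimit_ord (aleph0_le_aleph 1)).succ_lt (ih b.1 b.2) |>.trans_eq (Cardinal.ord_aleph 1)

theorem hat_some {T : Set Trip} {X Y : Cantor} {k : ℕ} {u : KNode}
    (h : some (k, u) ∈ HatTree T X Y) : 1 ≤ k ∧ u ≠ [] ∧ u ∈ TkTree T X Y k := by
  simp only [HatTree, Set.mem_setOf_eq] at h
  rcases h with h | ⟨k', u', heq, hk, hne, hmem⟩
  · exact absurd h (by simp)
  · have h2 := Option.some.inj heq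
    obtain ⟨rfl, rfl⟩ : k = k' ∧ u = u' :=
      ⟨congrArg Prod.fst h2, congrArg Prod.snd h2⟩
    exact ⟨hk, hne, hmem⟩

theorem mem_WSet_of_hat {T : Set Trip} {C : Set Cantor} {X Y : Cantor} {m k : ℕ} {u : KNode}
    (hXC : X ∈ C) (hYC : Y ∈ C) (hm : X m ≠ Y m)
    (hmem : some (k, u) ∈ HatTree T X Y) (hlen : m < u.length) :
    (k, res X u.length, res Y u.length, u) ∈ WSet T C := by
  obtain ⟨hk, hne, hTk⟩ := hat_some hmem
  refine ⟨hk, by simp [res_length], by simp [res_length], ?_, ⟨X, hXC, by rw [res_length]⟩,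
    ⟨Y, hYC, by rw [res_length]⟩, hTk.1, ?_⟩
  · intro h
    exact hm (eq_of_res_eq h hlen)
  · intro i hi
    have h := hTk.2 i hi
    rwa [bdry_eq_bdryF X Y k u i, bdry_eq_bdryF X Y k u (i + 1)] at h
  

theorem transfer {T : Set Trip} {C : Set Cantor} {X Y : Cantor}
    [IsWellFounded WA (WRel T C)] {m : ℕ}
    (hXC : X ∈ C) (hYC : Y ∈ C) (hm : X m ≠ Y m) :
    ∀ γ : Ordinal.{0}, ∀ (k : ℕ) (u : KNode), some (k, u) ∈ HatTree T X Y → m < u.length →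
      RankGe (HatTree T X Y) HatLt (some (k, u)) γ →
      γ ≤ IsWellFounded.rank (WRel T C) (k, res X u.length, res Y u.length, u) := by
  intro γ
  induction γ using Ordinal.induction with
  | h γ ih =>
    intro k u hmem hlen hrk
    apply le_of_forall_lt
    intro β hβ
    obtain ⟨v, hvS, hvlt, hvrk⟩ := (rankGe_iff _ _ _ _).mp hrk β hβ
    rcases v with _ | ⟨k₂, u₂⟩
    · exact hvlt.elim
    · obtain ⟨hk2, hlt⟩ := hvlt
      subst hk2
      have hlen2 : m < u₂.length := Nat.lt_of_lt_of_le hlen hlt.1.length_le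
      have hrel : WRel T C (k, res X u₂.length, res Y u₂.length, u₂)
          (k, res X u.length, res Y u.length, u) :=
        ⟨mem_WSet_of_hat hXC hYC hm hvS hlen2, mem_WSet_of_hat hXC hYC hm hmem hlen, rfl,
          res_prefix X hlt.1.length_le, res_prefix Y hlt.1.length_le, hlt.1, listlt_length hlt⟩
      exact lt_of_le_of_lt (ih β hβ k u₂ hvS hlen2 hvrk) (IsWellFounded.rank_lt_of_rel hrel)

theorem ord_succ_self (δ : Ordinal.{0}) : δ < δ + 1 := by
  rw [Ordinal.add_one_eq_succ]
  exact Order.lt_succ δ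

theorem descend {T : Set Trip} {X Y : Cantor} :
    ∀ (j : ℕ) (δ : Ordinal.{0}), RankGe (HatTree T X Y) HatLt none (δ + ((j + 1 : ℕ) : Ordinal)) →
      ∃ k u, some (k, u) ∈ HatTree T X Y ∧ j < u.length ∧
        RankGe (HatTree T X Y) HatLt (some (k, u)) δ := by
  intro j
  induction j with
  | zero =>
    intro δ h
    have hδ : δ < δ + ((0 + 1 : ℕ) : Ordinal) := by
      rw [show ((0 + 1 : ℕ) : Ordinal) = 1 by norm_num]
      exact ord_succ_self δ
    obtain ⟨v, hvS, hvlt, hvrk⟩ := (rankGe_iff _ _ _ _).mp h δ hδ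
    rcases v with _ | ⟨k, u⟩
    · exact hvlt.elim
    · obtain ⟨hk, hne, -⟩ := hat_some hvS
      exact ⟨k, u, hvS, List.length_pos_iff.mpr hne, hvrk⟩
  | succ j ih =>
    intro δ h
    have heq : δ + ((j + 1 + 1 : ℕ) : Ordinal) = (δ + 1) + ((j + 1 : ℕ) : Ordinal) := by
      have h1 : ((j + 1 + 1 : ℕ) : Ordinal) = ((1 : ℕ) : Ordinal) + ((j + 1 : ℕ) : Ordinal) := by
        rw [← Nat.cast_add]
        congr 1
        omega
      rw [h1, Nat.cast_one, ← add_assoc]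
    rw [heq] at h
    obtain ⟨k, u, hmem, hlen, hrk⟩ := ih (δ + 1) h
    obtain ⟨v, hvS, hvlt, hvrk⟩ := (rankGe_iff _ _ _ _).mp hrk δ (ord_succ_self δ)
    rcases v with _ | ⟨k₂, u₂⟩
    · exact hvlt.elim
    · obtain ⟨hk2, hlt⟩ := hvlt
      subst hk2
      exact ⟨k, u₂, hvS, Nat.lt_of_le_of_lt hlen (listlt_length hlt), hvrk⟩

end Statement13Aux

/-- Let `E` be an equivalence relation on Cantor space represented by a
swap-closed triple tree `T`, and let `C` be a nonempty perfect set all of whose distinct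
elements are pairwise `E`-inequivalent. Then there is a single countable ordinal `α` such
that for all distinct `X, Y ∈ C`, `rk(T̂_{X,Y}) ≥ α` fails; i.e. all distinct elements of
`C` are pairwise `E_α`-inequivalent. -/
theorem statement13 (E : Set (Cantor × Cantor)) (T : Set Trip)
    (hT : IsTripleTree T) (hswap : SwapClosed T) (hrep : Represents T E)
    (hE : Equivalence fun X Y : Cantor => (X, Y) ∈ E)
    (C : Set Cantor) (hCne : C.Nonempty) (hC : Perfect C)
    (hineq : ∀ X ∈ C, ∀ Y ∈ C, X ≠ Y → (X, Y) ∉ E) :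
    ∃ α : Ordinal.{0}, α < (Cardinal.aleph 1).ord ∧
      ∀ X ∈ C, ∀ Y ∈ C, X ≠ Y → ¬ HatRankGe T X Y α := by
  classical
  have hCc : IsClosed C := hC.closed
  have hwf : WellFounded (Statement13Aux.WRel T C) := Statement13Aux.wrel_wf hT hrep hE hCc hineq
  haveI : IsWellFounded Statement13Aux.WA (Statement13Aux.WRel T C) := ⟨hwf⟩
  have hρ : ∀ a, IsWellFounded.rank (Statement13Aux.WRel T C) a < (Cardinal.aleph 1).ord :=
    fun a => Statement13Aux.rank_lt_omega1 a
  set σ : Ordinal.{0} := ⨆ a : Statement13Aux.WA, IsWellFounded.rank (Statement13Aux.WRel T C) a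
    with hσdef
  have hσ : σ < (Cardinal.aleph 1).ord := by
    rw [Cardinal.ord_aleph]; exact Ordinal.iSup_lt_omega_one (fun a => (Cardinal.ord_aleph 1) ▸ hρ a)
  have hprin := Ordinal.isPrincipal_add_ord (Cardinal.aleph0_le_aleph 1)
  have hω : Ordinal.omega0 < (Cardinal.aleph 1).ord := by
    rw [← Cardinal.ord_aleph0]
    exact Cardinal.ord_lt_ord.mpr Cardinal.aleph0_lt_aleph_one
  have h1 : (1 : Ordinal) < (Cardinal.aleph 1).ord := lt_trans Ordinal.one_lt_omega0 hω
  refine ⟨σ + 1 + Ordinal.omega0, hprin (hprin hσ h1) hω, ?_⟩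
  rintro X hX Y hY hne ⟨hroot, hrk⟩
  obtain ⟨m, hm⟩ := Function.ne_iff.mp hne
  have hmono : RankGe (HatTree T X Y) HatLt none ((σ + 1) + ((m + 1 : ℕ) : Ordinal)) :=
    Statement13Aux.RankGe.mono hrk (by
      apply add_le_add_right
      exact (Ordinal.nat_lt_omega0 (m + 1)).le)
  obtain ⟨k, u, humem, hlen, hurk⟩ := Statement13Aux.descend m (σ + 1) hmono
  have htr := Statement13Aux.transfer hX hY hm (σ + 1) k u humem hlen hurk
  have hle : IsWellFounded.rank (Statement13Aux.WRel T C)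
      (k, res X u.length, res Y u.length, u) ≤ σ := by
    rw [hσdef]
    exact Ordinal.le_iSup _ _
  have hcon : σ + 1 ≤ σ := htr.trans hle
  rw [Ordinal.add_one_eq_succ] at hcon
  exact (Order.succ_le_iff.mp hcon).false
end
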